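/- arXiv:2604.20408 — 7 statements merged into one kernel-verified Lean document; each statement's English description precedes it below -/
import Mathlib

section
/- Let 1 ≤ p < ∞, f ∈ L^p[0,1], and λ ∈ ℂ with Re λ > -1/p'. Then for almost every s ∈ (0,1), (1/s^{λ+1}) ∫_0^s u^λ f(u) du = ∫_0^∞ e^{-λt} (T(t)f)(s) dt, and the right-hand Bochner integral converges in L^p[0,1]. -/
open MeasureTheory Set
open scoped ENNReal

lemma map_scale {c : ℝ} (hc : 0 < c) (hc1 : c ≤ 1) :
    Measure.map (fun s : ℝ => c * s) (volume.restrict (Ioc (0:ℝ) 1))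
      = (ENNReal.ofReal c)⁻¹ • volume.restrict (Ioc (0:ℝ) c) := by
  have hpre : (fun s : ℝ => c * s) ⁻¹' (Ioc 0 c) = Ioc 0 1 := by
    ext x
    simp only [mem_preimage, mem_Ioc]
    constructor
    · rintro ⟨h1, h2⟩
      constructor
      · nlinarith
      · nlinarith
    · rintro ⟨h1, h2⟩
      exact ⟨mul_pos hc h1, by nlinarith⟩
  rw [← hpre, ← Measure.restrict_map (measurable_const_mul c) measurableSet_Ioc,
    Real.map_volume_mul_left hc.ne', Measure.restrict_smul, abs_of_pos (inv_pos.2 hc),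
    ENNReal.ofReal_inv_of_pos hc]

lemma elp_scale {p : ℝ≥0∞} (hp' : p ≠ ∞) (f : ℝ → ℂ)
    (hfm : AEStronglyMeasurable f (volume.restrict (Ioc (0:ℝ) 1)))
    {c : ℝ} (hc : 0 < c) (hc1 : c ≤ 1) :
    eLpNorm (fun s => f (c * s)) p (volume.restrict (Ioc (0:ℝ) 1))
      = (ENNReal.ofReal c)⁻¹ ^ (1 / p).toReal * eLpNorm f p (volume.restrict (Ioc (0:ℝ) c)) := by
  have hmp : MeasurePreserving (fun s : ℝ => c * s) (volume.restrict (Ioc (0:ℝ) 1))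
      ((ENNReal.ofReal c)⁻¹ • volume.restrict (Ioc (0:ℝ) c)) :=
    ⟨measurable_const_mul c, map_scale hc hc1⟩
  have hle : volume.restrict (Ioc (0:ℝ) c) ≤ volume.restrict (Ioc (0:ℝ) 1) :=
    Measure.restrict_mono (Ioc_subset_Ioc le_rfl hc1) le_rfl
  have hac : (ENNReal.ofReal c)⁻¹ • volume.restrict (Ioc (0:ℝ) c)
      ≪ volume.restrict (Ioc (0:ℝ) 1) :=
    Measure.smul_absolutelyContinuous.trans (Measure.absolutelyContinuous_of_le hle)
  have h := eLpNorm_comp_measurePreserving (p := p) (hfm.mono_ac hac) hmp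
  rw [eLpNorm_smul_measure_of_ne_top hp'] at h
  simpa [Function.comp_def, smul_eq_mul] using h
lemma image_phi {s : ℝ} (hs : 0 < s) :
    (fun t : ℝ => s * Real.exp (-t)) '' (Ioi 0) = Ioo 0 s := by
  ext x
  constructor
  · rintro ⟨t, ht, rfl⟩
    have h1 : Real.exp (-t) < 1 := by
      rw [Real.exp_lt_one_iff]; linarith [mem_Ioi.1 ht]
    exact ⟨mul_pos hs (Real.exp_pos _), mul_lt_of_lt_one_right hs h1⟩
  · rintro ⟨hx0, hxs⟩
    refine ⟨Real.log (s / x), ?_, ?_⟩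
    · rw [mem_Ioi, Real.log_pos_iff (by positivity)]
      rw [lt_div_iff₀ hx0]; linarith
    · show s * Real.exp (-Real.log (s / x)) = x
      rw [Real.exp_neg, Real.exp_log (by positivity)]
      field_simp

lemma subst_eq (f : ℝ → ℂ) (lam : ℂ) {s : ℝ} (hs : 0 < s) (hs1 : s ≤ 1) :
    (s : ℂ) ^ (-(lam + 1)) * ∫ u in Ioc (0:ℝ) s, (u : ℂ) ^ lam * f u =
      ∫ t in Ioi (0:ℝ),
        Complex.exp (-(lam * t)) * ((Real.exp (-t) : ℂ) * f (Real.exp (-t) * s)) := by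
  have hsC : (s : ℂ) ≠ 0 := Complex.ofReal_ne_zero.2 hs.ne'
  have hpow_ne : (s : ℂ) ^ (lam + 1) ≠ 0 := by
    simp [Complex.cpow_eq_zero_iff, hsC]
  have hderiv : ∀ t ∈ Ioi (0:ℝ), HasDerivWithinAt (fun t : ℝ => s * Real.exp (-t))
      (-(s * Real.exp (-t))) (Ioi 0) t := by
    intro t _
    have h1 : HasDerivAt (fun t : ℝ => Real.exp (-t)) (-Real.exp (-t)) t := by
      simpa [Function.comp_def] using (Real.hasDerivAt_exp (-t)).comp t (hasDerivAt_neg t)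
    simpa [mul_comm, mul_neg] using ((h1.const_mul s).hasDerivWithinAt)
  have hinj : InjOn (fun t : ℝ => s * Real.exp (-t)) (Ioi 0) := by
    intro a _ b _ h
    have := mul_left_cancel₀ hs.ne' h
    have := Real.exp_injective this
    linarith [neg_injective this]
  have key := integral_image_eq_integral_abs_deriv_smul measurableSet_Ioi hderiv hinj
      (fun u => (u : ℂ) ^ lam * f u)
  rw [image_phi hs] at key
  have hIoc : ∫ u in Ioc (0:ℝ) s, (u : ℂ) ^ lam * f u
      = ∫ u in Ioo (0:ℝ) s, (u : ℂ) ^ lam * f u := by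
    rw [← integral_Ioc_eq_integral_Ioo]
  rw [hIoc, key]
  have heq : ∀ t : ℝ, |(-(s * Real.exp (-t)))| • (((s * Real.exp (-t) : ℝ) : ℂ) ^ lam
        * f (s * Real.exp (-t)))
      = (s : ℂ) ^ (lam + 1) *
        (Complex.exp (-(lam * t)) * ((Real.exp (-t) : ℂ) * f (Real.exp (-t) * s))) := by
    intro t
    have habs : |(-(s * Real.exp (-t)))| = s * Real.exp (-t) := by
      rw [abs_neg, abs_of_pos (mul_pos hs (Real.exp_pos _))]
    have hcpow : ((s * Real.exp (-t) : ℝ) : ℂ) ^ lam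
        = (s : ℂ) ^ lam * Complex.exp (-(lam * t)) := by
      rw [Complex.ofReal_mul, Complex.mul_cpow_ofReal_nonneg hs.le (Real.exp_pos _).le]
      congr 1
      rw [Complex.cpow_def_of_ne_zero (by
        exact_mod_cast (Real.exp_pos (-t)).ne'), ← Complex.ofReal_log (Real.exp_pos (-t)).le,
        Real.log_exp]
      congr 1
      push_cast
      ring
    have hspow : (s:ℂ) ^ (lam + 1) = (s:ℂ) ^ lam * s := by
      rw [Complex.cpow_add _ _ hsC, Complex.cpow_one]
    rw [habs, hcpow, hspow, mul_comm (Real.exp (-t)) s, Complex.real_smul]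
    push_cast
    ring
  simp_rw [heq]
  rw [integral_const_mul, ← mul_assoc, Complex.cpow_neg, inv_mul_cancel₀ hpow_ne, one_mul]

/-- For `1 ≤ p < ∞`, `f ∈ L^p[0,1]` and `Re λ > -1/p'`, almost everywhere on `(0,1)`
`(Λ_0^λ f)(s) = s^{-(λ+1)} ∫_0^s u^λ f(u) du = ∫_0^∞ e^{-λt} (T(t)f)(s) dt`, and the
right-hand Bochner integral converges in `L^p[0,1]` (the `L^p`-norm of the integrand
is integrable on `(0,∞)`). -/
theorem stmt5 (p : ℝ≥0∞) (hp : 1 ≤ p) (hp' : p ≠ ∞) (f : ℝ → ℂ)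
    (hf : MemLp f p (volume.restrict (Ioc (0:ℝ) 1))) (lam : ℂ)
    (hl : -(1 - 1 / p.toReal) < lam.re) :
    (IntegrableOn (fun t : ℝ => Real.exp (-(lam.re * t)) *
        (eLpNorm (fun s => (Real.exp (-t) : ℂ) * f (Real.exp (-t) * s)) p
            (volume.restrict (Ioc (0:ℝ) 1))).toReal) (Ioi 0)) ∧
    ∀ᵐ (s : ℝ) ∂(volume.restrict (Ioc (0:ℝ) 1)),
      (s : ℂ) ^ (-(lam + 1)) * ∫ u in Ioc (0:ℝ) s, (u : ℂ) ^ lam * f u =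
        ∫ t in Ioi (0:ℝ),
          Complex.exp (-(lam * t)) * ((Real.exp (-t) : ℂ) * f (Real.exp (-t) * s)) := by
  set μ := volume.restrict (Ioc (0:ℝ) 1) with hμ
  have hq1 : 1 ≤ p.toReal := by
    have := ENNReal.toReal_mono hp' hp
    simpa using this
  have hq0 : 0 < p.toReal := lt_of_lt_of_le one_pos hq1
  set r : ℝ := (1 / p).toReal with hr
  have hrq : r = 1 / p.toReal := by
    rw [hr, ENNReal.toReal_div, ENNReal.toReal_one]
  have ha : 0 < lam.re + 1 - r := by rw [hrq]; linarith
  set A := (eLpNorm f p μ).toReal with hA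
  set G : ℝ → ℝ :=
    fun t => (eLpNorm f p (volume.restrict (Ioc (0:ℝ) (min (Real.exp (-t)) 1)))).toReal with hG
  have hfin : ∀ t : ℝ,
      eLpNorm f p (volume.restrict (Ioc (0:ℝ) (min (Real.exp (-t)) 1))) ≤ eLpNorm f p μ :=
    fun t => eLpNorm_mono_measure f
      (Measure.restrict_mono (Ioc_subset_Ioc le_rfl (min_le_right _ _)) le_rfl)
  have hGle : ∀ t, G t ≤ A := fun t => ENNReal.toReal_mono hf.2.ne (hfin t)
  have hGanti : Antitone G := by
    intro t1 t2 h12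
    refine ENNReal.toReal_mono (lt_of_le_of_lt (hfin t1) hf.2).ne ?_
    exact eLpNorm_mono_measure f (Measure.restrict_mono
      (Ioc_subset_Ioc le_rfl (min_le_min (Real.exp_le_exp.2 (neg_le_neg h12)) le_rfl)) le_rfl)
  set h' : ℝ → ℝ :=
    fun t => Real.exp (-(lam.re * t)) * (Real.exp (-t) * Real.exp (t * r) * G t) with hh'
  have hmeas : Measurable h' :=
    Measurable.mul (by fun_prop) (Measurable.mul (by fun_prop) hGanti.measurable)
  have heqOn : EqOn h' (fun t : ℝ => Real.exp (-(lam.re * t)) *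
      (eLpNorm (fun s => (Real.exp (-t) : ℂ) * f (Real.exp (-t) * s)) p μ).toReal) (Ioi 0) := by
    intro t ht
    have hct : 0 < Real.exp (-t) := Real.exp_pos _
    have hct1 : Real.exp (-t) ≤ 1 := by
      rw [Real.exp_le_one_iff]
      linarith [mem_Ioi.1 ht]
    have h1 : eLpNorm (fun s => (Real.exp (-t) : ℂ) * f (Real.exp (-t) * s)) p μ
        = (‖((Real.exp (-t) : ℝ) : ℂ)‖₊ : ℝ≥0∞) * eLpNorm (fun s => f (Real.exp (-t) * s)) p μ := by
      rw [← enorm_eq_nnnorm]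
      exact
        eLpNorm_const_smul ((Real.exp (-t) : ℝ) : ℂ) (fun s => f (Real.exp (-t) * s)) p μ
    have hmin : min (Real.exp (-t)) 1 = Real.exp (-t) := min_eq_left hct1
    have h2 : ((‖((Real.exp (-t) : ℝ) : ℂ)‖₊ : ℝ≥0∞)).toReal = Real.exp (-t) := by
      simp only [ENNReal.coe_toReal, coe_nnnorm, Complex.norm_real, Real.norm_eq_abs,
        abs_of_pos hct]
    have h3 : (((ENNReal.ofReal (Real.exp (-t)))⁻¹ ^ r)).toReal = Real.exp (t * r) := by
      rw [← ENNReal.toReal_rpow, ENNReal.toReal_inv, ENNReal.toReal_ofReal hct.le]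
      rw [show (Real.exp (-t))⁻¹ = Real.exp t by rw [← Real.exp_neg, neg_neg]]
      exact (Real.exp_mul t r).symm
    simp only [hh', hG, hmin]
    rw [h1, elp_scale hp' f hf.1 hct hct1, ENNReal.toReal_mul, ENNReal.toReal_mul, h2, h3]
    ring
  have hint : IntegrableOn h' (Ioi 0) := by
    refine Integrable.mono' (g := fun t => A * Real.exp (-(lam.re + 1 - r) * t))
      (((exp_neg_integrableOn_Ioi 0 ha)).const_mul A) hmeas.aestronglyMeasurable ?_
    filter_upwards [ae_restrict_mem measurableSet_Ioi] with t _
    have hGpos : 0 ≤ G t := ENNReal.toReal_nonneg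
    have h2 : Real.exp (-(lam.re * t)) * (Real.exp (-t) * Real.exp (t * r))
        = Real.exp (-(lam.re + 1 - r) * t) := by
      rw [← Real.exp_add, ← Real.exp_add]
      ring_nf
    have hnn : 0 ≤ h' t :=
      mul_nonneg (Real.exp_pos _).le
        (mul_nonneg (mul_nonneg (Real.exp_pos _).le (Real.exp_pos _).le) hGpos)
    rw [Real.norm_eq_abs, abs_of_nonneg hnn]
    calc h' t = Real.exp (-(lam.re * t)) * (Real.exp (-t) * Real.exp (t * r)) * G t := by
          rw [hh']; ring
      _ = Real.exp (-(lam.re + 1 - r) * t) * G t := by rw [h2]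
      _ ≤ Real.exp (-(lam.re + 1 - r) * t) * A :=
          mul_le_mul_of_nonneg_left (hGle t) (Real.exp_pos _).le
      _ = A * Real.exp (-(lam.re + 1 - r) * t) := mul_comm _ _
  constructor
  · exact IntegrableOn.congr_fun hint heqOn measurableSet_Ioi
  · filter_upwards [ae_restrict_mem measurableSet_Ioc] with s hs
    exact subst_eq f lam hs.1 hs.2
end

section
/- Let 1 ≤ p < ∞, f ∈ L^p[0,1], and λ ∈ ℂ with Re λ > -1/p. Then for almost every s ∈ (0,1), s^λ ∫_s^1 f(u)/u^{λ+1} du = ∫_0^∞ e^{-λt} (S(t)f)(s) dt, where S(t)f(s) = χ_{[0,e^{-t})}(s) f(e^t s). -/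
open MeasureTheory Set
open scoped ENNReal

/-- For `1 ≤ p < ∞`, `f ∈ L^p[0,1]` and `Re λ > -1/p`, almost everywhere on `(0,1)`
`(Λ_1^λ f)(s) = s^λ ∫_s^1 f(u)/u^{λ+1} du = ∫_0^∞ e^{-λ t} (S(t)f)(s) dt`, where
`S(t)f(s) = χ_{[0,e^{-t})}(s) f(e^t s)`. -/
theorem stmt6 (p : ℝ≥0∞) (hp : 1 ≤ p) (hp' : p ≠ ∞) (f : ℝ → ℂ)
    (hf : MemLp f p (volume.restrict (Ioc (0:ℝ) 1))) (lam : ℂ)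
    (hl : -(1 / p.toReal) < lam.re) :
    ∀ᵐ (s : ℝ) ∂(volume.restrict (Ioc (0:ℝ) 1)),
      (s : ℂ) ^ lam * ∫ u in Ioc s 1, f u / (u : ℂ) ^ (lam + 1) =
        ∫ t in Ioi (0:ℝ),
          Complex.exp (-(lam * t)) *
            (if s ∈ Ico (0:ℝ) (Real.exp (-t)) then f (Real.exp t * s) else 0) := by
  filter_upwards [ae_restrict_mem measurableSet_Ioc] with s hs
  obtain ⟨hs0, hs1⟩ := hs
  set L := -Real.log s with hL
  have hsC : (s:ℂ) ≠ 0 := by exact_mod_cast hs0.ne'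
  have hcond : ∀ t : ℝ, (s ∈ Ico (0:ℝ) (Real.exp (-t))) ↔ t < L := by
    intro t
    simp only [mem_Ico, hs0.le, true_and, hL]
    have key : s < Real.exp (-t) ↔ Real.log s < -t := by
      nth_rewrite 1 [← Real.exp_log hs0]
      exact Real.exp_lt_exp
    rw [key]
    constructor <;> intro h <;> linarith
  -- rewrite RHS as integral over Ioo 0 L
  have hR : (∫ t in Ioi (0:ℝ), Complex.exp (-(lam * t)) *
        (if s ∈ Ico (0:ℝ) (Real.exp (-t)) then f (Real.exp t * s) else 0))
      = ∫ t in Ioo (0:ℝ) L, Complex.exp (-(lam * t)) * f (Real.exp t * s) := by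
    have h1 : ∀ t : ℝ, Complex.exp (-(lam * t)) *
        (if s ∈ Ico (0:ℝ) (Real.exp (-t)) then f (Real.exp t * s) else 0)
        = (Iio L).indicator (fun t => Complex.exp (-(lam * t)) * f (Real.exp t * s)) t := by
      intro t
      by_cases h : t < L
      · simp [indicator, h, (hcond t).mpr h]
      · rw [if_neg (fun hh => h ((hcond t).mp hh)),
          indicator_of_notMem (by simpa using h), mul_zero]
    simp_rw [h1]
    rw [setIntegral_indicator measurableSet_Iio, Set.Ioi_inter_Iio]
  rw [hR]
  -- image of Ioo 0 L under t ↦ s * exp t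
  have himg : (fun t => s * Real.exp t) '' Ioo 0 L = Ioo s 1 := by
    ext u
    simp only [mem_image, mem_Ioo]
    constructor
    · rintro ⟨t, ⟨ht0, htL⟩, rfl⟩
      have h1 : (1:ℝ) < Real.exp t := by simpa using Real.exp_lt_exp.mpr ht0
      have h2 : Real.exp t < Real.exp L := Real.exp_lt_exp.mpr htL
      have h3 : Real.exp L = 1 / s := by
        rw [hL, Real.exp_neg, Real.exp_log hs0, one_div]
      constructor
      · nlinarith
      · rw [h3] at h2
        calc s * Real.exp t < s * (1/s) := by nlinarith
          _ = 1 := by field_simp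
    · rintro ⟨hsu, hu1⟩
      refine ⟨Real.log (u / s), ⟨?_, ?_⟩, ?_⟩
      · apply Real.log_pos
        rw [lt_div_iff₀ hs0]; linarith
      · rw [hL, Real.log_div (by linarith) hs0.ne']
        have : Real.log u < 0 := Real.log_neg (by linarith) hu1
        linarith
      · rw [Real.exp_log (div_pos (by linarith) hs0), mul_div_cancel₀ _ hs0.ne']
  have hinj : InjOn (fun t => s * Real.exp t) (Ioo 0 L) := by
    intro a _ b _ h
    exact Real.exp_injective (mul_left_cancel₀ hs0.ne' h)
  have hchg : (∫ u in Ioo s 1, f u / (u:ℂ) ^ (lam + 1))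
      = ∫ t in Ioo (0:ℝ) L, |s * Real.exp t| •
          (f (s * Real.exp t) / ((s * Real.exp t : ℝ) : ℂ) ^ (lam + 1)) := by
    rw [← himg]
    exact integral_image_eq_integral_abs_deriv_smul measurableSet_Ioo
      (fun t _ => ((Real.hasDerivAt_exp t).const_mul s).hasDerivWithinAt) hinj _
  rw [integral_Ioc_eq_integral_Ioo, hchg, ← integral_const_mul]
  refine setIntegral_congr_fun measurableSet_Ioo fun t ht => ?_
  obtain ⟨ht0, htL⟩ := ht
  have hx : (0:ℝ) < s * Real.exp t := by positivity
  have hxC : ((s * Real.exp t : ℝ) : ℂ) ≠ 0 := by exact_mod_cast hx.ne'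
  have hexp : ((Real.exp t : ℝ) : ℂ) ^ lam = Complex.exp (lam * t) := by
    rw [Complex.cpow_def_of_ne_zero (by exact_mod_cast (Real.exp_pos t).ne'),
      ← Complex.ofReal_log (Real.exp_pos t).le, Real.log_exp, mul_comm]
  have hpow : ((s * Real.exp t : ℝ) : ℂ) ^ lam
      = (s:ℂ) ^ lam * Complex.exp (lam * t) := by
    rw [Complex.ofReal_mul, Complex.mul_cpow_ofReal_nonneg hs0.le (Real.exp_pos t).le, hexp]
  have hslam : (s:ℂ) ^ lam ≠ 0 := by
    simp [Complex.cpow_eq_zero_iff, hsC]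
  rw [abs_of_pos hx, Complex.real_smul,
    Complex.cpow_add _ _ hxC, Complex.cpow_one, hpow, mul_comm (Real.exp t) s,
    Complex.exp_neg]
  have hE : Complex.exp (lam * t) ≠ 0 := Complex.exp_ne_zero _
  push_cast
  field_simp
end

section
/- Let 1 ≤ p < ∞ and λ ∈ ℂ with Re λ < -1/p. If f ∈ L^p[0,1] satisfies ∫_0^1 f(u)/u^{λ+1} du = 0, then the function h(s) = -s^λ ∫_0^s f(u)/u^{λ+1} du belongs to L^p[0,1] and satisfies ‖h‖_p ≤ ∫_0^∞ e^{(Re λ + 1/p)t} dt · ‖f‖_p = ‖f‖_p / (-Re λ - 1/p). -/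
open MeasureTheory Set
open scoped ENNReal

theorem ofReal_norm_eq_coe_nnnorm {E : Type*} [SeminormedAddCommGroup E] (a : E) :
    ENNReal.ofReal ‖a‖ = (‖a‖₊ : ℝ≥0∞) := by
  rw [← coe_nnnorm, ENNReal.ofReal_coe_nnreal]

/-- For `1 ≤ p < ∞` and `Re λ < -1/p`: if `f ∈ L^p[0,1]` satisfies
`∫_0^1 f(u)/u^{λ+1} du = 0`, then `h(s) = -s^λ ∫_0^s f(u)/u^{λ+1} du` belongs to
`L^p[0,1]` with `‖h‖_p ≤ ‖f‖_p / (-Re λ - 1/p)`. -/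
theorem stmt12 (p : ℝ≥0∞) (hp : 1 ≤ p) (hp' : p ≠ ∞) (lam : ℂ)
    (hl : lam.re < -(1 / p.toReal)) (f : ℝ → ℂ)
    (hf : MemLp f p (volume.restrict (Ioc (0:ℝ) 1)))
    (hker : ∫ u in Ioc (0:ℝ) 1, f u / (u : ℂ) ^ (lam + 1) = 0) :
    let h : ℝ → ℂ := fun s => -((s : ℂ) ^ lam * ∫ u in Ioc (0:ℝ) s, f u / (u : ℂ) ^ (lam + 1))
    MemLp h p (volume.restrict (Ioc (0:ℝ) 1)) ∧
    eLpNorm h p (volume.restrict (Ioc (0:ℝ) 1)) ≤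
      ENNReal.ofReal ((-lam.re - 1 / p.toReal)⁻¹) *
        eLpNorm f p (volume.restrict (Ioc (0:ℝ) 1)) := by
  intro h
  have hp0 : p ≠ 0 := (lt_of_lt_of_le zero_lt_one hp).ne'
  set μ : Measure ℝ := volume.restrict (Ioc (0:ℝ) 1) with hμdef
  set P : ℝ := p.toReal with hPdef
  have hP0 : 0 < P := ENNReal.toReal_pos hp0 hp'
  have hP1 : 1 ≤ P := by
    rw [← ENNReal.toReal_one]; exact ENNReal.toReal_mono hp' hp
  set a : ℝ := lam.re with hadef
  set δ : ℝ := -a - 1/P with hδdef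
  have hδ0 : 0 < δ := by rw [hδdef]; linarith
  -- monotonicity of restricted measures
  have hmono : ∀ s : ℝ, s ≤ 1 → volume.restrict (Ioc (0:ℝ) s) ≤ μ := by
    intro s hs
    exact Measure.restrict_mono (Ioc_subset_Ioc_right hs) le_rfl
  -- h unfolds
  have hh : ∀ s : ℝ, h s = -((s : ℂ) ^ lam * ∫ u in Ioc (0:ℝ) s, f u / (u : ℂ) ^ (lam + 1)) :=
    fun s => rfl
  -- norm of the kernel
  have hgnorm : ∀ u : ℝ, u ∈ Ioc (0:ℝ) 1 →
      (‖f u / (u:ℂ)^(lam+1)‖₊ : ℝ≥0∞)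
        = (‖f u‖₊ : ℝ≥0∞) * ENNReal.ofReal (u ^ (-(a+1))) := by
    intro u hu
    have hu0 : 0 < u := hu.1
    have hnorm : ‖(u:ℂ)^(lam+1)‖ = u ^ (a+1) := by
      rw [Complex.norm_cpow_eq_rpow_re_of_pos hu0]
      rw [Complex.add_re, Complex.one_re, hadef]
    rw [← ofReal_norm_eq_coe_nnnorm, ← ofReal_norm_eq_coe_nnnorm, norm_div, hnorm,
      div_eq_mul_inv, ← Real.rpow_neg hu0.le, ENNReal.ofReal_mul (norm_nonneg _)]
  -- beta-type integral
  have hint1 : ∀ s : ℝ, 0 < s →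
      ∫⁻ u in Ioc (0:ℝ) s, ENNReal.ofReal (u^(δ-1)) = ENNReal.ofReal (s^δ/δ) := by
    intro s hs
    have hInt : IntegrableOn (fun u:ℝ => u^(δ-1)) (Ioc 0 s) := by
      have := intervalIntegral.intervalIntegrable_rpow' (a := 0) (b := s) (r := δ-1)
        (by linarith)
      rwa [intervalIntegrable_iff_integrableOn_Ioc_of_le hs.le] at this
    rw [← ofReal_integral_eq_lintegral_ofReal hInt ?_]
    · congr 1
      have h2 := integral_rpow (a := 0) (b := s) (r := δ-1) (Or.inl (by linarith))
      rw [intervalIntegral.integral_of_le hs.le] at h2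
      rw [h2, sub_add_cancel, Real.zero_rpow hδ0.ne']
      ring
    · filter_upwards [self_mem_ae_restrict measurableSet_Ioc] with u hu
      exact Real.rpow_nonneg hu.1.le _
  -- Hölder step
  have key1 : ∀ s ∈ Ioc (0:ℝ) 1,
      ∫⁻ u in Ioc (0:ℝ) s, (‖f u‖₊ : ℝ≥0∞) * ENNReal.ofReal (u ^ (-(a+1)))
        ≤ ((∫⁻ u in Ioc (0:ℝ) s, (‖f u‖₊ : ℝ≥0∞)^P * ENNReal.ofReal (u^δ)))^(1/P)
            * (ENNReal.ofReal (s^δ/δ))^(1-1/P) := by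
    intro s hs
    have hs0 : 0 < s := hs.1
    have hexp : ∀ u : ℝ, 0 < u →
        u ^ (-(a+1)) = u^(δ/P) * u^((δ-1)*(1-1/P)) := by
      intro u hu
      rw [← Real.rpow_add hu]
      congr 1
      rw [hδdef]
      field_simp
      ring
    rcases eq_or_lt_of_le hP1 with hP1' | hP1'
    · -- P = 1
      rw [show (1:ℝ) - 1/P = 0 by rw [← hP1']; norm_num, ENNReal.rpow_zero, mul_one,
        show (1:ℝ)/P = 1 by rw [← hP1']; norm_num, ENNReal.rpow_one]
      apply le_of_eq
      apply setLIntegral_congr_fun_ae measurableSet_Ioc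
      filter_upwards with u hu
      rw [show P = 1 from hP1'.symm, ENNReal.rpow_one]
      congr 2
      rw [hδdef, ← hP1']
      ring
    · -- 1 < P
      have hpq : P.HolderConjugate (P/(P-1)) := (Real.holderConjugate_iff_eq_conjExponent hP1').2 rfl
      have hQc : 1/(P/(P-1)) = 1 - 1/P := by field_simp
      have hf1m : AEMeasurable (fun u => (‖f u‖₊ : ℝ≥0∞) * ENNReal.ofReal (u^(δ/P)))
          (volume.restrict (Ioc (0:ℝ) s)) := by
        refine AEMeasurable.mul (f := fun u => (‖f u‖₊ : ℝ≥0∞)) (g := fun u => ENNReal.ofReal (u^(δ/P))) ?_ ?_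
        · exact (hf.1.mono_measure (hmono s hs.2)).enorm
        · exact (ENNReal.measurable_ofReal.comp (measurable_id.pow_const _)).aemeasurable
      have hf2m : AEMeasurable (fun u : ℝ => ENNReal.ofReal (u^((δ-1)*(1-1/P))))
          (volume.restrict (Ioc (0:ℝ) s)) :=
        (ENNReal.measurable_ofReal.comp (measurable_id.pow_const _)).aemeasurable
      calc ∫⁻ u in Ioc (0:ℝ) s, (‖f u‖₊ : ℝ≥0∞) * ENNReal.ofReal (u ^ (-(a+1)))
          = ∫⁻ u in Ioc (0:ℝ) s,
              ((fun u => (‖f u‖₊ : ℝ≥0∞) * ENNReal.ofReal (u^(δ/P))) *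
               (fun u : ℝ => ENNReal.ofReal (u^((δ-1)*(1-1/P))))) u := by
            apply setLIntegral_congr_fun_ae measurableSet_Ioc
            filter_upwards with u hu
            simp only [Pi.mul_apply]
            rw [hexp u hu.1, ENNReal.ofReal_mul (Real.rpow_nonneg hu.1.le _), mul_assoc]
        _ ≤ (∫⁻ u in Ioc (0:ℝ) s, ((‖f u‖₊ : ℝ≥0∞) * ENNReal.ofReal (u^(δ/P)))^P)^(1/P)
              * (∫⁻ u in Ioc (0:ℝ) s,
                  (ENNReal.ofReal (u^((δ-1)*(1-1/P))))^(P/(P-1)))^(1/(P/(P-1))) :=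
            ENNReal.lintegral_mul_le_Lp_mul_Lq _ hpq hf1m hf2m
        _ = (∫⁻ u in Ioc (0:ℝ) s, (‖f u‖₊ : ℝ≥0∞)^P * ENNReal.ofReal (u^δ))^(1/P)
              * (ENNReal.ofReal (s^δ/δ))^(1-1/P) := by
            congr 1
            · congr 1
              apply setLIntegral_congr_fun_ae measurableSet_Ioc
              filter_upwards with u hu
              rw [ENNReal.mul_rpow_of_nonneg _ _ hP0.le,
                ENNReal.ofReal_rpow_of_pos (Real.rpow_pos_of_pos hu.1 _),
                ← Real.rpow_mul hu.1.le, div_mul_cancel₀ _ hP0.ne']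
            · rw [← hint1 s hs0, hQc]
              congr 1
              apply setLIntegral_congr_fun_ae measurableSet_Ioc
              filter_upwards with u hu
              rw [ENNReal.ofReal_rpow_of_pos (Real.rpow_pos_of_pos hu.1 _),
                ← Real.rpow_mul hu.1.le]
              congr 2
              field_simp
  -- pointwise bound for h
  have key2 : ∀ s ∈ Ioc (0:ℝ) 1,
      (‖h s‖₊ : ℝ≥0∞) ≤ ENNReal.ofReal (s^a) *
        ∫⁻ u in Ioc (0:ℝ) s, (‖f u‖₊ : ℝ≥0∞) * ENNReal.ofReal (u ^ (-(a+1))) := by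
    intro s hs
    have hs0 : 0 < s := hs.1
    have h1 : (‖h s‖₊ : ℝ≥0∞)
        = ENNReal.ofReal (s^a) * (‖∫ u in Ioc (0:ℝ) s, f u / (u:ℂ)^(lam+1)‖₊ : ℝ≥0∞) := by
      rw [hh s, ← ofReal_norm_eq_coe_nnnorm, ← ofReal_norm_eq_coe_nnnorm, norm_neg, norm_mul]
      rw [Complex.norm_cpow_eq_rpow_re_of_pos hs0, ← hadef]
      rw [ENNReal.ofReal_mul (Real.rpow_nonneg hs0.le _)]
    rw [h1]
    refine mul_le_mul_right ?_ _
    refine le_trans (enorm_integral_le_lintegral_enorm _) (le_of_eq ?_)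
    apply setLIntegral_congr_fun_ae measurableSet_Ioc
    filter_upwards with u hu
    exact hgnorm u ⟨hu.1, hu.2.trans hs.2⟩
  set E : ℝ := a - 1 + 1/P with hEdef
  have hE1 : E + 1 = -δ := by rw [hEdef, hδdef]; ring
  -- combined pointwise bound for ‖h‖^P
  have key3 : ∀ s ∈ Ioc (0:ℝ) 1,
      (‖h s‖₊ : ℝ≥0∞)^P
        ≤ (ENNReal.ofReal (δ^(1-P)) * ENNReal.ofReal (s^E)) *
            (∫⁻ u in Ioc (0:ℝ) s, (‖f u‖₊ : ℝ≥0∞)^P * ENNReal.ofReal (u^δ)) := by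
    intro s hs
    have hs0 : 0 < s := hs.1
    have h1 : (‖h s‖₊ : ℝ≥0∞)^P
        ≤ (ENNReal.ofReal (s^a) *
            ((∫⁻ u in Ioc (0:ℝ) s, (‖f u‖₊ : ℝ≥0∞)^P * ENNReal.ofReal (u^δ))^(1/P) *
              (ENNReal.ofReal (s^δ/δ))^(1-1/P)))^P :=
      ENNReal.rpow_le_rpow (le_trans (key2 s hs) (mul_le_mul_right (key1 s hs) _)) hP0.le
    refine h1.trans (le_of_eq ?_)
    rw [ENNReal.mul_rpow_of_nonneg _ _ hP0.le, ENNReal.mul_rpow_of_nonneg _ _ hP0.le,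
      ← ENNReal.rpow_mul, one_div_mul_cancel hP0.ne', ENNReal.rpow_one]
    have hc1 : (ENNReal.ofReal (s^a))^P = ENNReal.ofReal ((s^a)^P) :=
      ENNReal.ofReal_rpow_of_pos (Real.rpow_pos_of_pos hs0 _)
    have hc2 : (ENNReal.ofReal (s^δ/δ))^(1-1/P) = ENNReal.ofReal ((s^δ/δ)^(1-1/P)) :=
      ENNReal.ofReal_rpow_of_pos (by positivity)
    rw [hc1, hc2, ENNReal.ofReal_rpow_of_pos (by positivity)]
    have hreal : (s^a)^P * ((s^δ/δ)^(1-1/P))^P = δ^(1-P) * s^E := by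
      have e1 : (s^a)^P = s^(a*P) := (Real.rpow_mul hs0.le a P).symm
      have e2 : ((s^δ/δ)^(1-1/P))^P = (s^δ/δ)^(P-1) := by
        rw [← Real.rpow_mul (by positivity : (0:ℝ) ≤ s^δ/δ)]
        congr 1
        field_simp
      have e3 : (s^δ/δ)^(P-1) = s^(δ*(P-1)) * δ^(1-P) := by
        rw [Real.div_rpow (Real.rpow_nonneg hs0.le _) hδ0.le, ← Real.rpow_mul hs0.le,
          div_eq_mul_inv, ← Real.rpow_neg hδ0.le, show -(P-1) = 1-P by ring]
      have e4 : s^(a*P) * s^(δ*(P-1)) = s^E := by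
        rw [← Real.rpow_add hs0]
        congr 1
        rw [hEdef, hδdef]
        field_simp
        ring
      rw [e1, e2, e3, ← mul_assoc, e4, mul_comm]
    calc ENNReal.ofReal ((s ^ a) ^ P) *
          ((∫⁻ u in Ioc (0:ℝ) s, (‖f u‖₊ : ℝ≥0∞)^P * ENNReal.ofReal (u^δ)) *
            ENNReal.ofReal (((s ^ δ / δ) ^ (1 - 1 / P)) ^ P))
        = (ENNReal.ofReal ((s ^ a) ^ P) * ENNReal.ofReal (((s ^ δ / δ) ^ (1 - 1 / P)) ^ P)) *
            (∫⁻ u in Ioc (0:ℝ) s, (‖f u‖₊ : ℝ≥0∞)^P * ENNReal.ofReal (u^δ)) := by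
          ring
      _ = ENNReal.ofReal (δ ^ (1 - P)) * ENNReal.ofReal (s ^ E) *
            (∫⁻ u in Ioc (0:ℝ) s, (‖f u‖₊ : ℝ≥0∞)^P * ENNReal.ofReal (u^δ)) := by
          rw [← ENNReal.ofReal_mul (by positivity), hreal,
            ENNReal.ofReal_mul (by positivity)]
  -- measurable representative
  obtain ⟨φ, hφmeas, hφeq⟩ :
      ∃ φ : ℝ → ℝ≥0∞, Measurable φ ∧ (fun u => (‖f u‖₊ : ℝ≥0∞)) =ᵐ[μ] φ :=
    ⟨(hf.1.enorm).mk _, (hf.1.enorm).measurable_mk, (hf.1.enorm).ae_eq_mk⟩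
  -- the interior beta integral for the Tonelli step
  have hint2 : ∀ u ∈ Ioc (0:ℝ) 1, ∫⁻ s in Icc u 1, ENNReal.ofReal (s^E)
      ≤ ENNReal.ofReal (u^(-δ) * δ⁻¹) := by
    intro u hu
    have hu0 : 0 < u := hu.1
    rw [setLIntegral_congr (Ioc_ae_eq_Icc (μ := volume) (a := u) (b := 1)).symm]
    have h0 : (0:ℝ) ∉ uIcc u 1 := by
      rw [Set.mem_uIcc]
      push_neg
      constructor <;> intro h' <;> linarith
    have hInt : IntegrableOn (fun s : ℝ => s^E) (Ioc u 1) := by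
      have := intervalIntegral.intervalIntegrable_rpow (μ := volume) (a := u) (b := 1)
        (r := E) (Or.inr h0)
      rwa [intervalIntegrable_iff_integrableOn_Ioc_of_le hu.2] at this
    rw [← ofReal_integral_eq_lintegral_ofReal hInt ?_]
    swap
    · filter_upwards [self_mem_ae_restrict measurableSet_Ioc] with s hs
      exact Real.rpow_nonneg (le_of_lt (lt_trans hu0 hs.1)) _
    apply ENNReal.ofReal_le_ofReal
    have h2 := integral_rpow (a := u) (b := 1) (r := E)
      (Or.inr ⟨by intro hc; rw [hc] at hE1; linarith, h0⟩)
    rw [intervalIntegral.integral_of_le hu.2] at h2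
    rw [h2, Real.one_rpow, hE1]
    have hrw : (1 - u^(-δ))/(-δ) = (u^(-δ) - 1)/δ := by
      rw [div_neg, ← neg_div, neg_sub]
    rw [hrw, div_eq_mul_inv]
    have : u^(-δ) - 1 ≤ u^(-δ) := by linarith
    exact mul_le_mul_of_nonneg_right this (by positivity)
  -- Tonelli step
  have hswap : ∫⁻ s in Ioc (0:ℝ) 1, ENNReal.ofReal (s^E) *
        (∫⁻ u in Ioc (0:ℝ) s, (‖f u‖₊ : ℝ≥0∞)^P * ENNReal.ofReal (u^δ))
      ≤ ENNReal.ofReal δ⁻¹ * ∫⁻ u in Ioc (0:ℝ) 1, (‖f u‖₊ : ℝ≥0∞)^P := by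
    set F' : ℝ → ℝ≥0∞ := fun u => (φ u)^P * ENNReal.ofReal (u^δ) with hF'def
    have hF'meas : Measurable F' := by fun_prop
    have hAeq : ∀ s ∈ Ioc (0:ℝ) 1,
        (∫⁻ u in Ioc (0:ℝ) s, (‖f u‖₊ : ℝ≥0∞)^P * ENNReal.ofReal (u^δ))
          = ∫⁻ u in Ioc (0:ℝ) s, F' u := by
      intro s hs
      apply lintegral_congr_ae
      filter_upwards [ae_mono (hmono s hs.2) hφeq] with u hu
      rw [hF'def]
      dsimp only
      rw [hu]
    set K : ℝ × ℝ → ℝ≥0∞ := fun z =>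
      ENNReal.ofReal (z.1^E) * ({w : ℝ×ℝ | 0 < w.2 ∧ w.2 ≤ w.1}.indicator (fun w => F' w.2) z)
      with hKdef
    have hset : MeasurableSet {w : ℝ×ℝ | 0 < w.2 ∧ w.2 ≤ w.1} :=
      (measurableSet_lt measurable_const measurable_snd).inter
        (measurableSet_le measurable_snd measurable_fst)
    have hKmeas : Measurable K := by
      refine Measurable.mul ?_ ?_
      · exact ENNReal.measurable_ofReal.comp (measurable_fst.pow_const E)
      · exact (hF'meas.comp measurable_snd).indicator hset
    have hinner1 : ∀ s ∈ Ioc (0:ℝ) 1,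
        ∫⁻ u in Ioc (0:ℝ) 1, K (s, u)
          = ENNReal.ofReal (s^E) * ∫⁻ u in Ioc (0:ℝ) s, F' u := by
      intro s hs
      rw [show (fun u => K (s, u)) = fun u =>
          ENNReal.ofReal (s^E) * ((Ioc (0:ℝ) s).indicator F' u) from ?_]
      · rw [lintegral_const_mul' _ _ ENNReal.ofReal_ne_top]
        congr 1
        rw [lintegral_indicator measurableSet_Ioc, Measure.restrict_restrict measurableSet_Ioc,
          inter_eq_left.mpr (Ioc_subset_Ioc_right hs.2)]
      · funext u
        rw [hKdef]
        dsimp only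
        by_cases hc : 0 < u ∧ u ≤ s
        · rw [indicator_of_mem (show (s,u) ∈ {w : ℝ×ℝ | 0 < w.2 ∧ w.2 ≤ w.1} from hc),
            indicator_of_mem (show u ∈ Ioc 0 s from hc)]
        · rw [indicator_of_notMem (show (s,u) ∉ {w : ℝ×ℝ | 0 < w.2 ∧ w.2 ≤ w.1} from hc),
            indicator_of_notMem (show u ∉ Ioc 0 s from hc)]
    have hinner2 : ∀ u ∈ Ioc (0:ℝ) 1,
        ∫⁻ s in Ioc (0:ℝ) 1, K (s, u) ≤ ENNReal.ofReal δ⁻¹ * (φ u)^P := by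
      intro u hu
      have hpt : (fun s => K (s, u))
          = fun s => F' u * (Ici u).indicator (fun s => ENNReal.ofReal (s^E)) s := by
        funext s
        by_cases hsu : u ≤ s
        · rw [hKdef]
          dsimp only
          rw [indicator_of_mem (show (s,u) ∈ {w : ℝ×ℝ | 0 < w.2 ∧ w.2 ≤ w.1} from ⟨hu.1, hsu⟩),
            indicator_of_mem (show s ∈ Ici u from hsu)]
          ring
        · rw [hKdef]
          dsimp only
          rw [indicator_of_notMem (show (s,u) ∉ {w : ℝ×ℝ | 0 < w.2 ∧ w.2 ≤ w.1} from
              fun hc => hsu hc.2),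
            indicator_of_notMem (show s ∉ Ici u from hsu), mul_zero, mul_zero]
      rw [hpt]
      have hm : Measurable fun s : ℝ =>
          (Ici u).indicator (fun s : ℝ => ENNReal.ofReal (s^E)) s := by
        apply Measurable.indicator _ measurableSet_Ici
        exact ENNReal.measurable_ofReal.comp (measurable_id.pow_const E)
      rw [lintegral_const_mul (F' u) hm]
      have hIcc : ∫⁻ s in Ioc (0:ℝ) 1,
          (Ici u).indicator (fun s => ENNReal.ofReal (s^E)) s
            = ∫⁻ s in Icc u 1, ENNReal.ofReal (s^E) := by
        rw [lintegral_indicator measurableSet_Ici, Measure.restrict_restrict measurableSet_Ici]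
        congr 2
        ext x
        simp only [mem_inter_iff, mem_Ici, mem_Ioc, mem_Icc]
        constructor
        · rintro ⟨h1, _, h3⟩; exact ⟨h1, h3⟩
        · rintro ⟨h1, h2⟩; exact ⟨h1, lt_of_lt_of_le hu.1 h1, h2⟩
      rw [hIcc]
      refine le_trans (mul_le_mul_right (hint2 u hu) _) (le_of_eq ?_)
      rw [hF'def]
      dsimp only
      rw [mul_assoc, ← ENNReal.ofReal_mul (Real.rpow_nonneg hu.1.le _), ← mul_assoc (u^δ),
        ← Real.rpow_add hu.1, add_neg_cancel, Real.rpow_zero, one_mul, mul_comm]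
    calc ∫⁻ s in Ioc (0:ℝ) 1, ENNReal.ofReal (s^E) *
          (∫⁻ u in Ioc (0:ℝ) s, (‖f u‖₊ : ℝ≥0∞)^P * ENNReal.ofReal (u^δ))
        = ∫⁻ s in Ioc (0:ℝ) 1, ∫⁻ u in Ioc (0:ℝ) 1, K (s, u) := by
          apply lintegral_congr_ae
          filter_upwards [self_mem_ae_restrict measurableSet_Ioc] with s hs
          rw [hinner1 s hs, hAeq s hs]
      _ = ∫⁻ u in Ioc (0:ℝ) 1, ∫⁻ s in Ioc (0:ℝ) 1, K (s, u) :=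
          lintegral_lintegral_swap hKmeas.aemeasurable
      _ ≤ ∫⁻ u in Ioc (0:ℝ) 1, ENNReal.ofReal δ⁻¹ * (φ u)^P :=
          lintegral_mono_ae ((ae_restrict_iff' measurableSet_Ioc).2 (ae_of_all _ hinner2))
      _ = ENNReal.ofReal δ⁻¹ * ∫⁻ u in Ioc (0:ℝ) 1, (φ u)^P :=
          lintegral_const_mul' _ _ ENNReal.ofReal_ne_top
      _ = ENNReal.ofReal δ⁻¹ * ∫⁻ u in Ioc (0:ℝ) 1, (‖f u‖₊ : ℝ≥0∞)^P := by
          congr 1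
          apply lintegral_congr_ae
          filter_upwards [hφeq] with u hu
          rw [hu]
  -- main estimate on the p-th power integral
  have hL : ∫⁻ s in Ioc (0:ℝ) 1, (‖h s‖₊ : ℝ≥0∞)^P
      ≤ ENNReal.ofReal (δ^(-P)) * ∫⁻ u in Ioc (0:ℝ) 1, (‖f u‖₊ : ℝ≥0∞)^P := by
    calc ∫⁻ s in Ioc (0:ℝ) 1, (‖h s‖₊ : ℝ≥0∞)^P
        ≤ ∫⁻ s in Ioc (0:ℝ) 1, (ENNReal.ofReal (δ^(1-P)) * ENNReal.ofReal (s^E)) *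
            (∫⁻ u in Ioc (0:ℝ) s, (‖f u‖₊ : ℝ≥0∞)^P * ENNReal.ofReal (u^δ)) :=
          lintegral_mono_ae ((ae_restrict_iff' measurableSet_Ioc).2 (ae_of_all _ key3))
      _ = ENNReal.ofReal (δ^(1-P)) * ∫⁻ s in Ioc (0:ℝ) 1, ENNReal.ofReal (s^E) *
            (∫⁻ u in Ioc (0:ℝ) s, (‖f u‖₊ : ℝ≥0∞)^P * ENNReal.ofReal (u^δ)) := by
          simp_rw [mul_assoc]
          exact lintegral_const_mul' _ _ ENNReal.ofReal_ne_top
      _ ≤ ENNReal.ofReal (δ^(1-P)) *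
            (ENNReal.ofReal δ⁻¹ * ∫⁻ u in Ioc (0:ℝ) 1, (‖f u‖₊ : ℝ≥0∞)^P) :=
          mul_le_mul_right hswap _
      _ = ENNReal.ofReal (δ^(-P)) * ∫⁻ u in Ioc (0:ℝ) 1, (‖f u‖₊ : ℝ≥0∞)^P := by
          rw [← mul_assoc, ← ENNReal.ofReal_mul (Real.rpow_nonneg hδ0.le _)]
          congr 2
          rw [← Real.rpow_neg_one δ, ← Real.rpow_add hδ0]
          congr 1
          ring
  have heLf : eLpNorm f p μ = (∫⁻ u in Ioc (0:ℝ) 1, (‖f u‖₊ : ℝ≥0∞)^P)^(1/P) := by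
    rw [eLpNorm_eq_lintegral_rpow_enorm_toReal hp0 hp']
    rfl
  have heLh : eLpNorm h p μ = (∫⁻ s in Ioc (0:ℝ) 1, (‖h s‖₊ : ℝ≥0∞)^P)^(1/P) := by
    rw [eLpNorm_eq_lintegral_rpow_enorm_toReal hp0 hp']
    rfl
  have hmain : eLpNorm h p μ ≤ ENNReal.ofReal δ⁻¹ * eLpNorm f p μ := by
    rw [heLh, heLf]
    calc (∫⁻ s in Ioc (0:ℝ) 1, (‖h s‖₊ : ℝ≥0∞)^P)^(1/P)
        ≤ (ENNReal.ofReal (δ^(-P)) * ∫⁻ u in Ioc (0:ℝ) 1, (‖f u‖₊ : ℝ≥0∞)^P)^(1/P) :=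
          ENNReal.rpow_le_rpow hL (by positivity)
      _ = ENNReal.ofReal δ⁻¹ * (∫⁻ u in Ioc (0:ℝ) 1, (‖f u‖₊ : ℝ≥0∞)^P)^(1/P) := by
          rw [ENNReal.mul_rpow_of_nonneg _ _ (by positivity),
            ENNReal.ofReal_rpow_of_pos (Real.rpow_pos_of_pos hδ0 _),
            ← Real.rpow_mul hδ0.le,
            show -P * (1/P) = -1 by field_simp, Real.rpow_neg_one]
  have hfin : eLpNorm h p μ < ⊤ :=
    lt_of_le_of_lt hmain (ENNReal.mul_lt_top ENNReal.ofReal_lt_top hf.2)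
  -- measurability of h
  have hIf : (∫⁻ u in Ioc (0:ℝ) 1, (‖f u‖₊ : ℝ≥0∞)^P) < ⊤ := by
    have h2 := hf.2
    rw [heLf] at h2
    exact (ENNReal.rpow_lt_top_iff_of_pos (by positivity)).1 h2
  have hmeas : AEStronglyMeasurable h μ := by
    have hgint : IntegrableOn (fun u => f u / (u:ℂ)^(lam+1)) (Ioc (0:ℝ) 1) volume := by
      constructor
      · have hinv : ContinuousOn (fun u : ℝ => ((u:ℂ)^(lam+1))⁻¹) (Ioc (0:ℝ) 1) := by
          intro u hu
          have hcw : ContinuousAt (fun u : ℝ => ((u:ℂ)^(lam+1))) u :=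
            (continuousAt_cpow_const (Complex.ofReal_mem_slitPlane.2 hu.1)).comp
              Complex.continuous_ofReal.continuousAt
          have hne : ((u:ℂ))^(lam+1) ≠ 0 := by
            rw [Ne, Complex.cpow_eq_zero_iff]
            push_neg
            intro hc
            exact absurd hc (Complex.ofReal_ne_zero.mpr hu.1.ne')
          exact (hcw.inv₀ hne).continuousWithinAt
        have hrw : (fun u => f u / (u:ℂ)^(lam+1)) = fun u => f u * ((u:ℂ)^(lam+1))⁻¹ := by
          funext u
          rw [div_eq_mul_inv]
        rw [hrw]
        exact hf.1.mul (hinv.aestronglyMeasurable measurableSet_Ioc)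
      · show (∫⁻ u in Ioc (0:ℝ) 1, (‖f u / (u:ℂ)^(lam+1)‖₊ : ℝ≥0∞)) < ⊤
        have e1 : (∫⁻ u in Ioc (0:ℝ) 1, (‖f u / (u:ℂ)^(lam+1)‖₊ : ℝ≥0∞))
            = ∫⁻ u in Ioc (0:ℝ) 1, (‖f u‖₊ : ℝ≥0∞) * ENNReal.ofReal (u ^ (-(a+1))) := by
          apply setLIntegral_congr_fun_ae measurableSet_Ioc
          filter_upwards with u hu
          exact hgnorm u hu
        have hA1 : (∫⁻ u in Ioc (0:ℝ) 1, (‖f u‖₊ : ℝ≥0∞)^P * ENNReal.ofReal (u^δ))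
            ≤ ∫⁻ u in Ioc (0:ℝ) 1, (‖f u‖₊ : ℝ≥0∞)^P := by
          apply lintegral_mono_ae
          refine (ae_restrict_iff' measurableSet_Ioc).2 (ae_of_all _ fun u hu => ?_)
          calc (‖f u‖₊ : ℝ≥0∞)^P * ENNReal.ofReal (u^δ)
              ≤ (‖f u‖₊ : ℝ≥0∞)^P * 1 := by
                refine mul_le_mul_right ?_ _
                rw [show (1:ℝ≥0∞) = ENNReal.ofReal 1 by simp]
                exact ENNReal.ofReal_le_ofReal (Real.rpow_le_one hu.1.le hu.2 hδ0.le)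
            _ = (‖f u‖₊ : ℝ≥0∞)^P := mul_one _
        rw [e1]
        refine lt_of_le_of_lt (key1 1 ⟨zero_lt_one, le_refl 1⟩) ?_
        apply ENNReal.mul_lt_top
        · exact ENNReal.rpow_lt_top_of_nonneg (by positivity)
            (lt_of_le_of_lt hA1 hIf).ne
        · exact ENNReal.rpow_lt_top_of_nonneg
            (by
              have : 1/P ≤ 1 := by rw [div_le_one hP0]; exact hP1
              linarith) ENNReal.ofReal_ne_top
    have hprim : ContinuousOn
        (fun s : ℝ => ∫ u in Ioc (0:ℝ) s, f u / (u:ℂ)^(lam+1)) (Icc (0:ℝ) 1) :=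
      intervalIntegral.continuousOn_primitive
        (by rwa [integrableOn_Icc_iff_integrableOn_Ioc])
    have hcpow : ContinuousOn (fun s : ℝ => (s:ℂ)^lam) (Ioc (0:ℝ) 1) := by
      intro s hs
      exact ((continuousAt_cpow_const
        (Complex.ofReal_mem_slitPlane.2 hs.1)).comp
        Complex.continuous_ofReal.continuousAt).continuousWithinAt
    have hcont : ContinuousOn h (Ioc (0:ℝ) 1) :=
      (hcpow.mul (hprim.mono Ioc_subset_Icc_self)).neg
    exact hcont.aestronglyMeasurable measurableSet_Ioc
  exact ⟨⟨hmeas, hfin⟩, hmain⟩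
end

section
/- Let Re α > 0 and 1 < p ≤ ∞. The generalized Cesàro-Hardy operator C_α f(s) = (α/s^α) ∫_0^s (s-u)^{α-1} f(u) du is bounded on L^p[0,1], with ‖C_α f‖_p ≤ |α| Γ(Re α) Γ(1/p') / Γ(Re α + 1/p') · ‖f‖_p, and satisfies the subordination formula C_α f(s) = α ∫_0^∞ (1-e^{-t})^{α-1} (T(t)f)(s) dt. -/
open MeasureTheory Set
open scoped ENNReal

lemma measurable_cpow_const (c : ℂ) : Measurable fun x : ℂ => x ^ c := by
  have h : (fun x : ℂ => x ^ c)
      = fun x => if x = 0 then (if c = 0 then 1 else 0) else Complex.exp (Complex.log x * c) :=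
    funext fun x => Complex.cpow_def x c
  rw [h]
  exact Measurable.ite (measurableSet_eq) measurable_const
    (Complex.measurable_exp.comp (Complex.measurable_log.mul_const c))

lemma null_preimage_mul {s : ℝ} (hs : s ≠ 0) {A : Set ℝ} (hA : volume A = 0) :
    volume ((fun r : ℝ => r * s) ⁻¹' A) = 0 := by
  obtain ⟨A', hAA', hA'm, hA'0⟩ := exists_measurable_superset_of_null hA
  refine measure_mono_null (preimage_mono hAA') ?_
  have hmap := Real.map_volume_mul_right hs
  have := Measure.map_apply (measurable_mul_const s) hA'm (μ := volume)
  rw [hmap] at this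
  simp only [Measure.smul_apply, smul_eq_mul, hA'0, mul_zero] at this
  exact this.symm

lemma ae_comp_mul {s : ℝ} (hs : 0 < s) (hs1 : s ≤ 1) {P : ℝ → Prop}
    (hP : ∀ᵐ u ∂(volume.restrict (Ioc (0:ℝ) 1)), P u) :
    ∀ᵐ r ∂(volume.restrict (Ioc (0:ℝ) 1)), P (r * s) := by
  rw [ae_iff, Measure.restrict_apply' measurableSet_Ioc] at hP ⊢
  refine measure_mono_null ?_ (null_preimage_mul (ne_of_gt hs) hP)
  intro r hr
  simp only [mem_inter_iff, mem_setOf_eq, mem_preimage, mem_Ioc] at hr ⊢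
  exact ⟨hr.1, mul_pos hr.2.1 hs, le_trans (mul_le_of_le_one_left hs.le hr.2.2) hs1⟩

lemma scaling_lintegral {h : ℝ → ℝ≥0∞} (hh : Measurable h) {r : ℝ} (hr : 0 < r) (hr1 : r ≤ 1) :
    ∫⁻ s in Ioc (0:ℝ) 1, h (r * s) ≤ ENNReal.ofReal r⁻¹ * ∫⁻ u in Ioc (0:ℝ) 1, h u := by
  have hφ : Measurable fun s : ℝ => r * s := measurable_const_mul r
  have hpre : (fun s : ℝ => r * s) ⁻¹' (Ioc 0 r) = Ioc (0:ℝ) 1 := by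
    ext s
    simp only [mem_preimage, mem_Ioc]
    constructor
    · rintro ⟨h1, h2⟩
      exact ⟨by nlinarith, by nlinarith⟩
    · rintro ⟨h1, h2⟩
      exact ⟨mul_pos hr h1, by nlinarith⟩
  have key : (volume.restrict (Ioc (0:ℝ) 1)).map (fun s => r * s)
      = ENNReal.ofReal r⁻¹ • volume.restrict (Ioc (0:ℝ) r) := by
    rw [← hpre, ← Measure.restrict_map hφ measurableSet_Ioc, Real.map_volume_mul_left hr.ne',
      Measure.restrict_smul, abs_of_pos (inv_pos.2 hr)]
  calc ∫⁻ s in Ioc (0:ℝ) 1, h (r * s)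
      = ∫⁻ u, h u ∂((volume.restrict (Ioc (0:ℝ) 1)).map (fun s => r * s)) :=
        (lintegral_map hh hφ).symm
    _ = ENNReal.ofReal r⁻¹ * ∫⁻ u in Ioc (0:ℝ) r, h u := by rw [key, lintegral_smul_measure, smul_eq_mul]
    _ ≤ ENNReal.ofReal r⁻¹ * ∫⁻ u in Ioc (0:ℝ) 1, h u := by
        gcongr

lemma cpow_ofReal_eq {x : ℝ} (hx0 : 0 ≤ x) (hx1 : x ≤ 1) (a c : ℝ) :
    (x:ℂ) ^ ((c:ℂ) - 1) * (1 - (x:ℂ)) ^ ((a:ℂ) - 1) = (((1-x)^(a-1) * x^(c-1) : ℝ) : ℂ) := by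
  have h1 : ((c:ℂ) - 1) = ((c - 1 : ℝ) : ℂ) := by push_cast; ring
  have h2 : ((a:ℂ) - 1) = ((a - 1 : ℝ) : ℂ) := by push_cast; ring
  have h3 : (1 - (x:ℂ)) = ((1 - x : ℝ) : ℂ) := by push_cast; ring
  rw [h1, h2, h3, ← Complex.ofReal_cpow hx0, ← Complex.ofReal_cpow (by linarith : (0:ℝ) ≤ 1 - x)]
  push_cast; ring

lemma beta_eq_ofReal {a c : ℝ} (ha : 0 < a) (hc : 0 < c) :
    Complex.betaIntegral (c:ℂ) (a:ℂ)
      = ((∫ r in Ioc (0:ℝ) 1, (1-r)^(a-1) * r^(c-1) : ℝ) : ℂ) := by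
  rw [Complex.betaIntegral, intervalIntegral.integral_of_le zero_le_one]
  rw [show ((∫ r in Ioc (0:ℝ) 1, (1-r)^(a-1) * r^(c-1) : ℝ) : ℂ)
      = ∫ r in Ioc (0:ℝ) 1, (((1-r)^(a-1) * r^(c-1) : ℝ) : ℂ) from (integral_ofReal).symm]
  exact setIntegral_congr_fun measurableSet_Ioc fun x hx => cpow_ofReal_eq hx.1.le hx.2 a c

lemma beta_integrableOn {a c : ℝ} (ha : 0 < a) (hc : 0 < c) :
    IntegrableOn (fun r : ℝ => (1-r)^(a-1) * r^(c-1)) (Ioc (0:ℝ) 1) := by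
  have h := (Complex.betaIntegral_convergent (u := (c:ℂ)) (v := (a:ℂ))
    (by simpa using hc) (by simpa using ha)).1
  have h2 := h.re
  refine h2.congr ?_
  refine (ae_restrict_iff' measurableSet_Ioc).mpr (ae_of_all _ fun x hx => ?_)
  simp only [cpow_ofReal_eq hx.1.le hx.2 a c]
  simp

lemma beta_value {a c : ℝ} (ha : 0 < a) (hc : 0 < c) :
    ∫ r in Ioc (0:ℝ) 1, (1-r)^(a-1) * r^(c-1)
      = Real.Gamma a * Real.Gamma c / Real.Gamma (a+c) := by
  have h := Complex.Gamma_mul_Gamma_eq_betaIntegral (s := (c:ℂ)) (t := (a:ℂ))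
    (by simpa using hc) (by simpa using ha)
  rw [beta_eq_ofReal ha hc] at h
  have hca : ((c:ℂ) + (a:ℂ)) = ((c + a : ℝ) : ℂ) := by push_cast; ring
  rw [hca, Complex.Gamma_ofReal, Complex.Gamma_ofReal, Complex.Gamma_ofReal] at h
  have h' : Real.Gamma c * Real.Gamma a
      = Real.Gamma (c+a) * ∫ r in Ioc (0:ℝ) 1, (1-r)^(a-1) * r^(c-1) := by
    exact_mod_cast h
  have hpos : 0 < Real.Gamma (c+a) := Real.Gamma_pos_of_pos (by linarith)
  rw [show a + c = c + a from add_comm a c]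
  field_simp
  linarith [h']

lemma beta_lintegral {a c : ℝ} (ha : 0 < a) (hc : 0 < c) :
    ∫⁻ r in Ioo (0:ℝ) 1, ENNReal.ofReal ((1-r)^(a-1) * r^(c-1))
      = ENNReal.ofReal (Real.Gamma a * Real.Gamma c / Real.Gamma (a+c)) := by
  have hio : (volume.restrict (Ioo (0:ℝ) 1)) = (volume.restrict (Ioc (0:ℝ) 1)) :=
    Measure.restrict_congr_set Ioo_ae_eq_Ioc
  rw [hio, ← beta_value ha hc]
  rw [← ofReal_integral_eq_lintegral_ofReal (beta_integrableOn ha hc)]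
  refine (ae_restrict_iff' measurableSet_Ioc).mpr (ae_of_all _ fun x hx => ?_)
  have h1 : (0:ℝ) ≤ 1 - x := by linarith [hx.2]
  simpa using mul_nonneg (Real.rpow_nonneg h1 (a-1)) (Real.rpow_nonneg hx.1.le (c-1))

lemma key_repr (alpha : ℂ) (f : ℝ → ℂ) {s : ℝ} (hs0 : 0 < s) (hs1 : s ≤ 1) :
    alpha / (s : ℂ) ^ alpha *
        ∫ u in Ioc (0:ℝ) s, ((s - u : ℝ) : ℂ) ^ (alpha - 1) * f u
      = alpha * ∫ r in Ioc (0:ℝ) 1, ((1 - r : ℝ) : ℂ) ^ (alpha - 1) * f (r * s) := by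
  set h : ℝ → ℂ := fun u => ((s - u : ℝ) : ℂ) ^ (alpha - 1) * f u with hh
  have h1 : ∫ u in Ioc (0:ℝ) s, h u = ∫ u in (0:ℝ)..s, h u :=
    (intervalIntegral.integral_of_le hs0.le).symm
  have h2 : (∫ u in (0:ℝ)..s, h u) = s • ∫ x in (0:ℝ)..1, h (s * x) := by
    rw [intervalIntegral.smul_integral_comp_mul_left h s, mul_zero, mul_one]
  have h3 : (∫ x in (0:ℝ)..1, h (s * x)) = ∫ x in Ioc (0:ℝ) 1, h (s * x) :=
    intervalIntegral.integral_of_le zero_le_one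
  have h4 : (∫ x in Ioc (0:ℝ) 1, h (s * x))
      = ∫ x in Ioc (0:ℝ) 1,
          (s:ℂ) ^ (alpha - 1) * (((1 - x : ℝ) : ℂ) ^ (alpha - 1) * f (x * s)) := by
    refine setIntegral_congr_fun measurableSet_Ioc fun x hx => ?_
    have hx1 : (0:ℝ) ≤ 1 - x := by linarith [hx.2]
    have : (s - s * x) = s * (1 - x) := by ring
    simp only [hh, this, Complex.ofReal_mul]
    rw [Complex.mul_cpow_ofReal_nonneg hs0.le hx1, mul_comm s x]
    ring
  have h5 : (∫ x in Ioc (0:ℝ) 1,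
        (s:ℂ) ^ (alpha - 1) * (((1 - x : ℝ) : ℂ) ^ (alpha - 1) * f (x * s)))
      = (s:ℂ) ^ (alpha - 1) * ∫ x in Ioc (0:ℝ) 1, ((1 - x : ℝ) : ℂ) ^ (alpha - 1) * f (x * s) :=
    integral_const_mul _ _
  rw [h1, h2, h3, h4, h5]
  have hsne : (s : ℂ) ≠ 0 := Complex.ofReal_ne_zero.mpr hs0.ne'
  have hsa : (s : ℂ) ^ alpha = (s:ℂ) * (s:ℂ) ^ (alpha - 1) := by
    conv_lhs => rw [show alpha = 1 + (alpha - 1) by ring]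
    rw [Complex.cpow_add _ _ hsne, Complex.cpow_one]
  have hpne : (s : ℂ) ^ (alpha - 1) ≠ 0 := by
    intro hcon
    rcases (Complex.cpow_eq_zero_iff _ _).mp hcon with ⟨h0, _⟩
    exact hsne h0
  rw [hsa, Complex.real_smul]
  field_simp
  simp only [mul_comm s]

lemma subst_exp (G : ℝ → ℂ) :
    ∫ r in Ioc (0:ℝ) 1, G r = ∫ t in Ioi (0:ℝ), Real.exp (-t) • G (Real.exp (-t)) := by
  rw [integral_Ioc_eq_integral_Ioo]
  have himg : (fun t : ℝ => Real.exp (-t)) '' (Ioi 0) = Ioo (0:ℝ) 1 := by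
    ext r
    constructor
    · rintro ⟨t, ht, rfl⟩
      exact ⟨Real.exp_pos _, Real.exp_lt_one_iff.mpr (by simpa using ht)⟩
    · rintro ⟨hr0, hr1⟩
      exact ⟨-Real.log r, by simpa using Real.log_neg hr0 hr1, by
        simp [Real.exp_log hr0]⟩
  have hderiv : ∀ t ∈ Ioi (0:ℝ),
      HasDerivWithinAt (fun t : ℝ => Real.exp (-t)) (-Real.exp (-t)) (Ioi 0) t := by
    intro t _
    have := ((Real.hasDerivAt_exp (-t)).comp t ((hasDerivAt_id t).neg))
    simpa [Function.comp_def] using this.hasDerivWithinAt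
  have hinj : InjOn (fun t : ℝ => Real.exp (-t)) (Ioi 0) := by
    intro t1 _ t2 _ h
    have := Real.exp_injective h
    linarith [neg_injective this]
  rw [← himg, integral_image_eq_integral_abs_deriv_smul measurableSet_Ioi hderiv hinj G]
  refine setIntegral_congr_fun measurableSet_Ioi fun t _ => ?_
  rw [abs_neg, abs_of_pos (Real.exp_pos _)]
lemma main_bound (alpha : ℂ) (ha : 0 < alpha.re) {q : ℝ} (hq : 1 < q)
    {g : ℝ → ℂ} (hg : StronglyMeasurable g) :
    ∫⁻ s in Ioc (0:ℝ) 1,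
        (‖∫ r in Ioc (0:ℝ) 1, ((1 - r : ℝ) : ℂ) ^ (alpha - 1) * g (r * s)‖₊ : ℝ≥0∞) ^ q
      ≤ ENNReal.ofReal (Real.Gamma alpha.re * Real.Gamma (1 - 1/q)
            / Real.Gamma (alpha.re + (1 - 1/q))) ^ q
          * ∫⁻ u in Ioc (0:ℝ) 1, (‖g u‖₊ : ℝ≥0∞) ^ q := by
  have hq0 : 0 < q := lt_trans one_pos hq
  set a := alpha.re with hadef
  set c : ℝ := 1 - 1/q with hcdef
  have hc0 : 0 < c := by
    have : 1/q < 1 := by rw [div_lt_one hq0]; exact hq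
    simp only [hcdef]; linarith
  have hc1 : c < 1 := by
    have : 0 < 1/q := by positivity
    simp only [hcdef]; linarith
  have hcq : c + 1/q = 1 := by simp [hcdef]
  have hconj : (c⁻¹).HolderConjugate q := by
    have h2 := Real.HolderConjugate.one_sub_inv_inv (a := q⁻¹) (by positivity)
      (inv_lt_one_of_one_lt₀ hq)
    rw [inv_inv] at h2
    simpa [hcdef, one_div] using h2
  set B : ℝ := Real.Gamma a * Real.Gamma c / Real.Gamma (a+c) with hBdef
  have hB0 : 0 ≤ B := by
    have := Real.Gamma_pos_of_pos ha
    have := Real.Gamma_pos_of_pos hc0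
    have := Real.Gamma_pos_of_pos (by linarith : 0 < a + c)
    positivity
  set nf : ℝ → ℝ≥0∞ := fun u => (‖g u‖₊ : ℝ≥0∞) with hnfdef
  have hnf : Measurable nf := hg.measurable.nnnorm.coe_nnreal_ennreal
  set N : ℝ≥0∞ := ∫⁻ u in Ioc (0:ℝ) 1, nf u ^ q with hNdef
  set W2 : ℝ → ℝ≥0∞ := fun r => ENNReal.ofReal ((1-r)^(a-1) * r^c) with hW2def
  have hW2 : Measurable W2 := by
    apply Measurable.ennreal_ofReal
    exact ((measurable_const.sub measurable_id).pow measurable_const).mul (measurable_id.pow measurable_const)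
  set V : ℝ → ℝ → ℝ≥0∞ := fun s r => W2 r * nf (r * s) ^ q with hVdef
  -- step 1: pointwise enorm bound
  have step1 : ∀ s : ℝ,
      (‖∫ r in Ioc (0:ℝ) 1, ((1 - r : ℝ) : ℂ) ^ (alpha - 1) * g (r * s)‖₊ : ℝ≥0∞)
        ≤ ∫⁻ r in Ioo (0:ℝ) 1, ENNReal.ofReal ((1-r)^(a-1)) * nf (r * s) := by
    intro s
    calc (‖∫ r in Ioc (0:ℝ) 1, ((1 - r : ℝ) : ℂ) ^ (alpha - 1) * g (r * s)‖₊ : ℝ≥0∞)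
        ≤ ∫⁻ r in Ioc (0:ℝ) 1, (‖((1 - r : ℝ) : ℂ) ^ (alpha - 1) * g (r * s)‖₊ : ℝ≥0∞) :=
          enorm_integral_le_lintegral_enorm _
      _ = ∫⁻ r in Ioo (0:ℝ) 1, (‖((1 - r : ℝ) : ℂ) ^ (alpha - 1) * g (r * s)‖₊ : ℝ≥0∞) := by
          rw [Measure.restrict_congr_set Ioo_ae_eq_Ioc]
      _ = ∫⁻ r in Ioo (0:ℝ) 1, ENNReal.ofReal ((1-r)^(a-1)) * nf (r * s) := by
          refine setLIntegral_congr_fun measurableSet_Ioo (fun r hr => ?_)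
          have h1r : (0:ℝ) < 1 - r := by linarith [hr.2]
          rw [nnnorm_mul, ENNReal.coe_mul]
          congr 1
          rw [← enorm_eq_nnnorm, ← ofReal_norm,
            Complex.norm_cpow_eq_rpow_re_of_pos h1r, Complex.sub_re, Complex.one_re]
  -- step 2: Hölder in r for fixed s
  have step2 : ∀ s : ℝ,
      (∫⁻ r in Ioo (0:ℝ) 1, ENNReal.ofReal ((1-r)^(a-1)) * nf (r * s))
        ≤ ENNReal.ofReal B ^ c * (∫⁻ r in Ioo (0:ℝ) 1, V s r) ^ (1/q) := by
    intro s
    set U : ℝ → ℝ≥0∞ := fun r => ENNReal.ofReal ((1-r)^((a-1)*c) * r^((c-1)*c)) with hUdef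
    set Vb : ℝ → ℝ≥0∞ :=
      fun r => ENNReal.ofReal ((1-r)^((a-1)/q) * r^((1-c)*c)) * nf (r * s) with hVbdef
    have hU : Measurable U := by
      apply Measurable.ennreal_ofReal
      exact ((measurable_const.sub measurable_id).pow measurable_const).mul (measurable_id.pow measurable_const)
    have hVb : Measurable Vb := by
      refine Measurable.mul (f := fun r => ENNReal.ofReal ((1-r)^((a-1)/q) * r^((1-c)*c)))
        (g := fun r => nf (r * s)) ?_ ?_
      · apply Measurable.ennreal_ofReal
        exact ((measurable_const.sub measurable_id).pow measurable_const).mul (measurable_id.pow measurable_const)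
      · exact hnf.comp (measurable_id.mul_const s)
    have hsplit : ∫⁻ r in Ioo (0:ℝ) 1, ENNReal.ofReal ((1-r)^(a-1)) * nf (r * s)
        = ∫⁻ r in Ioo (0:ℝ) 1, (U * Vb) r := by
      refine setLIntegral_congr_fun measurableSet_Ioo (fun r hr => ?_)
      have h1r : (0:ℝ) < 1 - r := by linarith [hr.2]
      have hr0 : (0:ℝ) < r := hr.1
      simp only [hUdef, hVbdef, Pi.mul_apply]
      rw [← mul_assoc, ← ENNReal.ofReal_mul (by positivity)]
      congr 2
      rw [show (1-r)^((a-1)*c) * r^((c-1)*c) * ((1-r)^((a-1)/q) * r^((1-c)*c))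
          = ((1-r)^((a-1)*c) * (1-r)^((a-1)/q)) * (r^((c-1)*c) * r^((1-c)*c)) by ring,
        ← Real.rpow_add h1r, ← Real.rpow_add hr0]
      have e1 : (a-1)*c + (a-1)/q = a - 1 := by rw [hcdef]; field_simp; ring
      have e2 : (c-1)*c + (1-c)*c = 0 := by ring
      rw [e1, e2, Real.rpow_zero, mul_one]
    rw [hsplit]
    calc ∫⁻ r in Ioo (0:ℝ) 1, (U * Vb) r
        ≤ (∫⁻ r in Ioo (0:ℝ) 1, U r ^ c⁻¹) ^ (1/c⁻¹)
            * (∫⁻ r in Ioo (0:ℝ) 1, Vb r ^ q) ^ (1/q) :=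
          ENNReal.lintegral_mul_le_Lp_mul_Lq _ hconj hU.aemeasurable hVb.aemeasurable
      _ = ENNReal.ofReal B ^ c * (∫⁻ r in Ioo (0:ℝ) 1, V s r) ^ (1/q) := by
          congr 1
          · rw [one_div, inv_inv]
            congr 1
            rw [← beta_lintegral ha hc0]
            refine setLIntegral_congr_fun measurableSet_Ioo (fun r hr => ?_)
            have h1r : (0:ℝ) < 1 - r := by linarith [hr.2]
            have hr0 : (0:ℝ) < r := hr.1
            simp only [hUdef]
            rw [ENNReal.ofReal_rpow_of_nonneg (by positivity) (by positivity),
              Real.mul_rpow (by positivity) (by positivity),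
              ← Real.rpow_mul h1r.le, ← Real.rpow_mul hr0.le]
            rw [mul_inv_cancel_right₀ (ne_of_gt hc0), mul_inv_cancel_right₀ (ne_of_gt hc0)]
          · congr 1
            refine setLIntegral_congr_fun measurableSet_Ioo (fun r hr => ?_)
            have h1r : (0:ℝ) < 1 - r := by linarith [hr.2]
            have hr0 : (0:ℝ) < r := hr.1
            simp only [hVbdef, hVdef, hW2def]
            rw [ENNReal.mul_rpow_of_nonneg _ _ hq0.le,
              ENNReal.ofReal_rpow_of_nonneg (by positivity) hq0.le,
              Real.mul_rpow (by positivity) (by positivity),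
              ← Real.rpow_mul h1r.le, ← Real.rpow_mul hr0.le]
            rw [div_mul_cancel₀ _ (ne_of_gt hq0)]
            congr 3
            have : (1 - c) = 1/q := by simp [hcdef]
            rw [this]
            field_simp
  -- main calc
  have hVmeas : Measurable (Function.uncurry V) := by
    apply Measurable.mul
    · exact hW2.comp measurable_snd
    · exact ((hnf.comp (measurable_snd.mul measurable_fst)).pow measurable_const)
  have hXne : ENNReal.ofReal B ^ (c*q) ≠ ⊤ :=
    ENNReal.rpow_ne_top_of_nonneg (by positivity) ENNReal.ofReal_ne_top
  have hcq1 : c * q + 1 = q := by rw [hcdef]; field_simp; ring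
  calc ∫⁻ s in Ioc (0:ℝ) 1,
        (‖∫ r in Ioc (0:ℝ) 1, ((1 - r : ℝ) : ℂ) ^ (alpha - 1) * g (r * s)‖₊ : ℝ≥0∞) ^ q
      ≤ ∫⁻ s in Ioc (0:ℝ) 1,
          (ENNReal.ofReal B ^ c * (∫⁻ r in Ioo (0:ℝ) 1, V s r) ^ (1/q)) ^ q :=
        lintegral_mono fun s => ENNReal.rpow_le_rpow (le_trans (step1 s) (step2 s)) hq0.le
    _ = ENNReal.ofReal B ^ (c*q) * ∫⁻ s in Ioc (0:ℝ) 1, ∫⁻ r in Ioo (0:ℝ) 1, V s r := by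
        rw [← lintegral_const_mul' _ _ hXne]
        refine lintegral_congr fun s => ?_
        rw [ENNReal.mul_rpow_of_nonneg _ _ hq0.le, ← ENNReal.rpow_mul,
          ← ENNReal.rpow_mul, one_div, inv_mul_cancel₀ hq0.ne', ENNReal.rpow_one]
    _ = ENNReal.ofReal B ^ (c*q) * ∫⁻ r in Ioo (0:ℝ) 1, ∫⁻ s in Ioc (0:ℝ) 1, V s r := by
        rw [lintegral_lintegral_swap hVmeas.aemeasurable]
    _ ≤ ENNReal.ofReal B ^ (c*q)
          * ∫⁻ r in Ioo (0:ℝ) 1, W2 r * (ENNReal.ofReal r⁻¹ * N) := by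
        refine mul_le_mul_right (lintegral_mono_ae ?_) _
        filter_upwards [ae_restrict_mem measurableSet_Ioo] with r hr
        rw [show (fun s => V s r) = fun s => W2 r * nf (r * s) ^ q from rfl,
          lintegral_const_mul' _ _ ENNReal.ofReal_ne_top]
        exact mul_le_mul_right
          (scaling_lintegral (hnf.pow measurable_const) hr.1 hr.2.le) _
    _ = ENNReal.ofReal B ^ (c*q) * (ENNReal.ofReal B * N) := by
        congr 1
        calc ∫⁻ r in Ioo (0:ℝ) 1, W2 r * (ENNReal.ofReal r⁻¹ * N)
            = ∫⁻ r in Ioo (0:ℝ) 1, ENNReal.ofReal ((1-r)^(a-1) * r^(c-1)) * N := by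
              refine setLIntegral_congr_fun measurableSet_Ioo (fun r hr => ?_)
              have h1r : (0:ℝ) < 1 - r := by linarith [hr.2]
              have hr0 : (0:ℝ) < r := hr.1
              rw [show W2 r = ENNReal.ofReal ((1-r)^(a-1) * r^c) from rfl, ← mul_assoc,
                ← ENNReal.ofReal_mul (by positivity)]
              congr 1
              have hx : r ^ (c-1) = r ^ c * r⁻¹ := by
                rw [Real.rpow_sub hr0, Real.rpow_one, div_eq_mul_inv]
              rw [hx]; ring
          _ = (∫⁻ r in Ioo (0:ℝ) 1, ENNReal.ofReal ((1-r)^(a-1) * r^(c-1))) * N := by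
              refine lintegral_mul_const _ ?_
              apply Measurable.ennreal_ofReal
              exact ((measurable_const.sub measurable_id).pow measurable_const).mul
                (measurable_id.pow measurable_const)
          _ = ENNReal.ofReal B * N := by rw [beta_lintegral ha hc0]
    _ = ENNReal.ofReal B ^ q * N := by
        rw [← mul_assoc]
        congr 1
        conv_rhs => rw [← hcq1]
        rw [ENNReal.rpow_add_of_nonneg _ _ (by positivity) zero_le_one, ENNReal.rpow_one]
lemma main_bound_top (alpha : ℂ) (ha : 0 < alpha.re) (f : ℝ → ℂ) {s : ℝ}
    (hs : s ∈ Ioc (0:ℝ) 1) :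
    (‖∫ r in Ioc (0:ℝ) 1, ((1 - r : ℝ) : ℂ) ^ (alpha - 1) * f (r * s)‖₊ : ℝ≥0∞)
      ≤ ENNReal.ofReal (Real.Gamma alpha.re * Real.Gamma 1 / Real.Gamma (alpha.re + 1))
          * eLpNormEssSup f (volume.restrict (Ioc (0:ℝ) 1)) := by
  set a := alpha.re with hadef
  set M := eLpNormEssSup f (volume.restrict (Ioc (0:ℝ) 1)) with hMdef
  have hMae : ∀ᵐ r ∂(volume.restrict (Ioo (0:ℝ) 1)), (‖f (r * s)‖₊ : ℝ≥0∞) ≤ M := by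
    refine ae_restrict_of_ae_restrict_of_subset Ioo_subset_Ioc_self ?_
    exact ae_comp_mul hs.1 hs.2 (P := fun u => (‖f u‖₊ : ℝ≥0∞) ≤ M)
      (enorm_ae_le_eLpNormEssSup f _)
  calc (‖∫ r in Ioc (0:ℝ) 1, ((1 - r : ℝ) : ℂ) ^ (alpha - 1) * f (r * s)‖₊ : ℝ≥0∞)
      ≤ ∫⁻ r in Ioc (0:ℝ) 1, (‖((1 - r : ℝ) : ℂ) ^ (alpha - 1) * f (r * s)‖₊ : ℝ≥0∞) :=
        enorm_integral_le_lintegral_enorm _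
    _ = ∫⁻ r in Ioo (0:ℝ) 1, (‖((1 - r : ℝ) : ℂ) ^ (alpha - 1) * f (r * s)‖₊ : ℝ≥0∞) := by
        rw [Measure.restrict_congr_set Ioo_ae_eq_Ioc]
    _ ≤ ∫⁻ r in Ioo (0:ℝ) 1, ENNReal.ofReal ((1-r)^(a-1)) * M := by
        refine lintegral_mono_ae ?_
        filter_upwards [hMae, ae_restrict_mem measurableSet_Ioo] with r hrM hr
        have h1r : (0:ℝ) < 1 - r := by linarith [hr.2]
        rw [nnnorm_mul, ENNReal.coe_mul]
        refine mul_le_mul' (le_of_eq ?_) hrM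
        rw [← enorm_eq_nnnorm, ← ofReal_norm,
          Complex.norm_cpow_eq_rpow_re_of_pos h1r, Complex.sub_re, Complex.one_re]
    _ = (∫⁻ r in Ioo (0:ℝ) 1, ENNReal.ofReal ((1-r)^(a-1))) * M := by
        refine lintegral_mul_const _ ?_
        exact Measurable.ennreal_ofReal ((measurable_const.sub measurable_id).pow measurable_const)
    _ = ENNReal.ofReal (Real.Gamma a * Real.Gamma 1 / Real.Gamma (a + 1)) * M := by
        congr 1
        rw [← beta_lintegral ha one_pos]
        refine setLIntegral_congr_fun measurableSet_Ioo (fun r hr => ?_)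
        rw [sub_self, Real.rpow_zero, mul_one]

/-- For `Re α > 0` and `1 < p ≤ ∞`, the Cesàro-Hardy operator
`C_α f(s) = (α/s^α) ∫_0^s (s-u)^{α-1} f(u) du` is bounded on `L^p[0,1]` with
`‖C_α f‖_p ≤ |α| Γ(Re α) Γ(1/p') / Γ(Re α + 1/p') ‖f‖_p`, and satisfies the
subordination formula `C_α f(s) = α ∫_0^∞ (1-e^{-t})^{α-1} (T(t)f)(s) dt`. -/
theorem stmt16 (p : ℝ≥0∞) (hp : 1 < p) (alpha : ℂ) (ha : 0 < alpha.re)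
    (f : ℝ → ℂ) (hf : MemLp f p (volume.restrict (Ioc (0:ℝ) 1))) :
    let C : ℝ → ℂ := fun s =>
      alpha / (s : ℂ) ^ alpha *
        ∫ u in Ioc (0:ℝ) s, ((s - u : ℝ) : ℂ) ^ (alpha - 1) * f u
    MemLp C p (volume.restrict (Ioc (0:ℝ) 1)) ∧
    eLpNorm C p (volume.restrict (Ioc (0:ℝ) 1)) ≤
      ENNReal.ofReal (‖alpha‖ * Real.Gamma alpha.re *
          Real.Gamma (1 - 1 / p.toReal) / Real.Gamma (alpha.re + (1 - 1 / p.toReal))) *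
        eLpNorm f p (volume.restrict (Ioc (0:ℝ) 1)) ∧
    ∀ᵐ (s : ℝ) ∂(volume.restrict (Ioc (0:ℝ) 1)),
      C s = alpha * ∫ t in Ioi (0:ℝ),
        ((1 - Real.exp (-t) : ℝ) : ℂ) ^ (alpha - 1) *
          ((Real.exp (-t) : ℂ) * f (Real.exp (-t) * s)) := by
  intro C
  have hCdef : ∀ s, C s = alpha / (s : ℂ) ^ alpha *
      ∫ u in Ioc (0:ℝ) s, ((s - u : ℝ) : ℂ) ^ (alpha - 1) * f u := fun s => rfl
  set μ := volume.restrict (Ioc (0:ℝ) 1) with hμdef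
  obtain ⟨hfm, hffin⟩ := hf
  set g := hfm.mk f with hgdef
  have hg : StronglyMeasurable g := hfm.stronglyMeasurable_mk
  have hfg : f =ᵐ[μ] g := hfm.ae_eq_mk
  set D : ℝ → ℂ :=
    fun s => alpha * ∫ r in Ioc (0:ℝ) 1, ((1 - r : ℝ) : ℂ) ^ (alpha - 1) * g (r * s)
    with hDdef
  have hgnorm : eLpNorm g p μ = eLpNorm f p μ := eLpNorm_congr_ae hfg.symm
  -- D strongly measurable
  have hDm : StronglyMeasurable D := by
    have h1 : StronglyMeasurable
        (fun s => ∫ r in Ioc (0:ℝ) 1, ((1 - r : ℝ) : ℂ) ^ (alpha - 1) * g (r * s)) := by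
      apply StronglyMeasurable.integral_prod_right' (ν := volume.restrict (Ioc (0:ℝ) 1))
        (f := fun z : ℝ × ℝ => ((1 - z.2 : ℝ) : ℂ) ^ (alpha - 1) * g (z.2 * z.1))
      refine Measurable.stronglyMeasurable (Measurable.mul ?_ ?_)
      · exact (Complex.measurable_ofReal.comp
          (measurable_const.sub measurable_snd)).pow measurable_const
      · exact hg.measurable.comp (measurable_snd.mul measurable_fst)
    exact h1.const_mul alpha
  -- C = D a.e.
  have hCD : C =ᵐ[μ] D := by
    filter_upwards [ae_restrict_mem measurableSet_Ioc] with s hs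
    rw [hCdef s, key_repr alpha f hs.1 hs.2, hDdef]
    congr 1
    refine integral_congr_ae ?_
    have := ae_comp_mul hs.1 hs.2 (P := fun u => f u = g u) hfg
    filter_upwards [this] with r hr
    rw [hr]
  -- norm bound for D
  have hnormD : eLpNorm D p μ ≤
      ENNReal.ofReal (‖alpha‖ * Real.Gamma alpha.re *
          Real.Gamma (1 - 1 / p.toReal) / Real.Gamma (alpha.re + (1 - 1 / p.toReal))) *
        eLpNorm g p μ := by
    have hK : ∀ x : ℝ, ENNReal.ofReal (‖alpha‖ * Real.Gamma alpha.re *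
        Real.Gamma x / Real.Gamma (alpha.re + x))
          = (‖alpha‖₊ : ℝ≥0∞) * ENNReal.ofReal (Real.Gamma alpha.re *
              Real.Gamma x / Real.Gamma (alpha.re + x)) := by
      intro x
      rw [← enorm_eq_nnnorm, ← ofReal_norm,
        ← ENNReal.ofReal_mul (norm_nonneg alpha)]
      congr 1
      ring
    rcases eq_or_ne p ⊤ with hp' | hp'
    · rw [hp']
      simp only [ENNReal.toReal_top, div_zero, sub_zero]
      rw [eLpNorm_exponent_top, eLpNorm_exponent_top, hK 1]
      refine essSup_le_of_ae_le _ ?_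
      filter_upwards [ae_restrict_mem measurableSet_Ioc] with s hs
      rw [hDdef]
      calc (‖alpha * ∫ r in Ioc (0:ℝ) 1, ((1 - r : ℝ) : ℂ) ^ (alpha - 1) * g (r * s)‖₊ : ℝ≥0∞)
          = (‖alpha‖₊ : ℝ≥0∞) *
            (‖∫ r in Ioc (0:ℝ) 1, ((1 - r : ℝ) : ℂ) ^ (alpha - 1) * g (r * s)‖₊ : ℝ≥0∞) := by
            rw [nnnorm_mul, ENNReal.coe_mul]
        _ ≤ (‖alpha‖₊ : ℝ≥0∞) * (ENNReal.ofReal (Real.Gamma alpha.re * Real.Gamma 1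
              / Real.Gamma (alpha.re + 1)) * eLpNormEssSup g μ) :=
            mul_le_mul_right (main_bound_top alpha ha g hs) _
        _ = _ := by rw [mul_assoc]
    · have hp0 : p ≠ 0 := (lt_trans zero_lt_one hp).ne'
      have hq : 1 < p.toReal := by
        rw [← ENNReal.toReal_one]
        exact ENNReal.toReal_strict_mono hp' hp
      set q := p.toReal with hqdef
      have hq0 : 0 < q := lt_trans one_pos hq
      rw [eLpNorm_eq_lintegral_rpow_enorm_toReal hp0 hp', eLpNorm_eq_lintegral_rpow_enorm_toReal hp0 hp']; simp only [enorm_eq_nnnorm]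
      have hsplit : ∫⁻ s, (‖D s‖₊ : ℝ≥0∞) ^ q ∂μ
          = (‖alpha‖₊ : ℝ≥0∞) ^ q * ∫⁻ s in Ioc (0:ℝ) 1,
              (‖∫ r in Ioc (0:ℝ) 1, ((1 - r : ℝ) : ℂ) ^ (alpha - 1) * g (r * s)‖₊ : ℝ≥0∞) ^ q := by
        rw [hμdef, ← lintegral_const_mul' _ _
          (ENNReal.rpow_ne_top_of_nonneg hq0.le ENNReal.coe_ne_top)]
        refine lintegral_congr fun s => ?_
        rw [hDdef, nnnorm_mul, ENNReal.coe_mul, ENNReal.mul_rpow_of_nonneg _ _ hq0.le]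
      rw [hsplit]
      calc ((‖alpha‖₊ : ℝ≥0∞) ^ q * ∫⁻ s in Ioc (0:ℝ) 1,
              (‖∫ r in Ioc (0:ℝ) 1, ((1 - r : ℝ) : ℂ) ^ (alpha - 1) * g (r * s)‖₊ : ℝ≥0∞) ^ q)
              ^ (1/q)
          ≤ ((‖alpha‖₊ : ℝ≥0∞) ^ q *
              (ENNReal.ofReal (Real.Gamma alpha.re * Real.Gamma (1 - 1/q)
                / Real.Gamma (alpha.re + (1 - 1/q))) ^ q
                * ∫⁻ u in Ioc (0:ℝ) 1, (‖g u‖₊ : ℝ≥0∞) ^ q)) ^ (1/q) := by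
            refine ENNReal.rpow_le_rpow ?_ (by positivity)
            exact mul_le_mul_right (main_bound alpha ha hq hg) _
        _ = _ := by
            rw [← mul_assoc, ENNReal.mul_rpow_of_nonneg _ _ (by positivity),
              ENNReal.mul_rpow_of_nonneg _ _ (by positivity),
              ← ENNReal.rpow_mul, ← ENNReal.rpow_mul,
              mul_one_div_cancel hq0.ne', ENNReal.rpow_one, ENNReal.rpow_one, hK (1 - 1/q)]
  refine ⟨⟨hDm.aestronglyMeasurable.congr hCD.symm, ?_⟩, ?_, ?_⟩
  · rw [eLpNorm_congr_ae hCD]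
    refine lt_of_le_of_lt hnormD ?_
    rw [hgnorm]
    exact ENNReal.mul_lt_top ENNReal.ofReal_lt_top hffin
  · rw [eLpNorm_congr_ae hCD, ← hgnorm]
    exact hnormD
  · filter_upwards [ae_restrict_mem measurableSet_Ioc] with s hs
    rw [hCdef s, key_repr alpha f hs.1 hs.2]
    congr 1
    rw [subst_exp (fun r => ((1 - r : ℝ) : ℂ) ^ (alpha - 1) * f (r * s))]
    refine setIntegral_congr_fun measurableSet_Ioi fun t _ => ?_
    rw [Complex.real_smul]
    ring
end

section
/- Let Re α > 0 and 1 ≤ p < ∞. The dual Cesàro-Hardy operator C_α^* f(s) = α ∫_s^1 (u-s)^{α-1} u^{-α} f(u) du is bounded on L^p[0,1] with ‖C_α^* f‖_p ≤ |α| Γ(Re α) Γ(1/p) / Γ(Re α + 1/p) · ‖f‖_p. -/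
open MeasureTheory Set
open scoped ENNReal


lemma betaReal_eq {a c : ℝ} (ha : 0 < a) (hc : 0 < c) :
    ∫ t in Ioc (0:ℝ) 1, (1-t)^(a-1) * t^(c-1) =
      Real.Gamma a * Real.Gamma c / Real.Gamma (a+c) := by
  have hbeta : Complex.betaIntegral c a
      = (((∫ t in Ioc (0:ℝ) 1, (1-t)^(a-1) * t^(c-1)) : ℝ) : ℂ) := by
    rw [Complex.betaIntegral, intervalIntegral.integral_of_le (by norm_num : (0:ℝ) ≤ 1)]
    refine (setIntegral_congr_fun measurableSet_Ioc fun x hx => ?_).trans integral_ofReal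
    have hx0 : (0:ℝ) ≤ x := hx.1.le
    have hx1 : (0:ℝ) ≤ 1 - x := by linarith [hx.2]
    have e1 : ((1:ℝ):ℂ) - (x:ℂ) = ((1 - x : ℝ) : ℂ) := by push_cast; ring
    have e1' : (1:ℂ) - (x:ℂ) = ((1 - x : ℝ) : ℂ) := by push_cast; ring
    have e2 : ((c:ℂ) - 1) = ((c - 1 : ℝ) : ℂ) := by push_cast; ring
    have e3 : ((a:ℂ) - 1) = ((a - 1 : ℝ) : ℂ) := by push_cast; ring
    simp only [e1, e1', e2, e3, ← Complex.ofReal_cpow hx0, ← Complex.ofReal_cpow hx1,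
      ← Complex.ofReal_mul]
    exact congrArg _ (mul_comm _ _)
  have hG := Complex.Gamma_mul_Gamma_eq_betaIntegral
    (show 0 < Complex.re (c:ℂ) by simpa) (show 0 < Complex.re (a:ℂ) by simpa)
  rw [hbeta] at hG
  have hGc : Real.Gamma c * Real.Gamma a
      = Real.Gamma (a+c) * ∫ t in Ioc (0:ℝ) 1, (1-t)^(a-1) * t^(c-1) := by
    have : (((Real.Gamma c * Real.Gamma a : ℝ)) : ℂ)
        = (((Real.Gamma (a+c) * ∫ t in Ioc (0:ℝ) 1, (1-t)^(a-1) * t^(c-1) : ℝ)) : ℂ) := by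
      push_cast
      rw [← Complex.Gamma_ofReal, ← Complex.Gamma_ofReal, hG, ← Complex.Gamma_ofReal]
      push_cast
      ring_nf
    exact_mod_cast this
  have hΓ : Real.Gamma (a+c) ≠ 0 := (Real.Gamma_pos_of_pos (by linarith)).ne'
  field_simp
  rw [mul_comm (Real.Gamma a), hGc]
  ring

lemma betaReal_integrable {a c : ℝ} (ha : 0 < a) (hc : 0 < c) :
    IntegrableOn (fun t : ℝ => (1-t)^(a-1) * t^(c-1)) (Ioc (0:ℝ) 1) := by
  have hint : IntervalIntegrable (fun x : ℝ => (x:ℂ)^((c:ℂ)-1) * ((1:ℂ)-(x:ℂ))^((a:ℂ)-1))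
      volume 0 1 := Complex.betaIntegral_convergent (by simpa) (by simpa)
  have h2 : IntegrableOn (fun x : ℝ => (x:ℂ)^((c:ℂ)-1) * ((1:ℂ)-(x:ℂ))^((a:ℂ)-1))
      (Ioc (0:ℝ) 1) := by
    have := (intervalIntegrable_iff.mp hint)
    simpa [uIoc_of_le (by norm_num : (0:ℝ) ≤ 1)] using this
  refine (h2.re.congr ?_)
  filter_upwards [ae_restrict_mem measurableSet_Ioc] with x hx
  have hx0 : (0:ℝ) ≤ x := hx.1.le
  have hx1 : (0:ℝ) ≤ 1 - x := by linarith [hx.2]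
  have e1' : (1:ℂ) - (x:ℂ) = ((1 - x : ℝ) : ℂ) := by push_cast; ring
  have e2 : ((c:ℂ) - 1) = ((c - 1 : ℝ) : ℂ) := by push_cast; ring
  have e3 : ((a:ℂ) - 1) = ((a - 1 : ℝ) : ℂ) := by push_cast; ring
  simp only [e1', e2, e3, ← Complex.ofReal_cpow hx0, ← Complex.ofReal_cpow hx1,
    ← Complex.ofReal_mul]
  simp [mul_comm]

lemma betaLintegral {a c : ℝ} (ha : 0 < a) (hc : 0 < c) :
    ∫⁻ t in Ioc (0:ℝ) 1, ENNReal.ofReal ((1-t)^(a-1) * t^(c-1)) =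
      ENNReal.ofReal (Real.Gamma a * Real.Gamma c / Real.Gamma (a+c)) := by
  rw [← betaReal_eq ha hc, ← ofReal_integral_eq_lintegral_ofReal (betaReal_integrable ha hc)]
  filter_upwards [ae_restrict_mem measurableSet_Ioc] with x hx
  have hx1 : (0:ℝ) ≤ 1 - x := by linarith [hx.2]
  exact mul_nonneg (Real.rpow_nonneg hx1 _) (Real.rpow_nonneg hx.1.le _)

lemma lintegral_image_deriv {s : Set ℝ} {f f' : ℝ → ℝ} (hs : MeasurableSet s)
    (hf' : ∀ x ∈ s, HasDerivWithinAt f (f' x) s x) (hf : InjOn f s) (g : ℝ → ℝ≥0∞) :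
    ∫⁻ x in f '' s, g x = ∫⁻ x in s, ENNReal.ofReal |f' x| * g (f x) := by
  simpa only [ContinuousLinearMap.det_toSpanSingleton] using
    lintegral_image_eq_lintegral_abs_det_fderiv_mul volume hs
      (fun x hx => (hf' x hx).hasFDerivWithinAt) hf g

/-- Beta lemma 2: `∫_0^u (u-s)^(a-1) s^(c-1) ds ≤ u^(a+c-1) B(a,c)`. -/
lemma beta2 {a c : ℝ} (ha : 0 < a) (hc : 0 < c) {u : ℝ} (hu : 0 < u) :
    ∫⁻ s in Ioo (0:ℝ) u, ENNReal.ofReal ((u-s)^(a-1) * s^(c-1)) ≤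
      ENNReal.ofReal (u^(a+c-1) * (Real.Gamma a * Real.Gamma c / Real.Gamma (a+c))) := by
  have himg : (fun t : ℝ => u * t) '' (Ioo 0 1) = Ioo 0 u := by
    rw [image_mul_left_Ioo hu]; norm_num
  have hderiv : ∀ t ∈ Ioo (0:ℝ) 1,
      HasDerivWithinAt (fun t : ℝ => u * t) u (Ioo 0 1) t := fun t _ =>
    ((hasDerivAt_id t).const_mul u).hasDerivWithinAt.congr_deriv (by ring)
  have hinj : InjOn (fun t : ℝ => u * t) (Ioo 0 1) :=
    fun x _ y _ h => by field_simp at h; exact h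
  rw [← himg, lintegral_image_deriv measurableSet_Ioo hderiv hinj]
  have hpt : ∀ t ∈ Ioo (0:ℝ) 1,
      ENNReal.ofReal |u| * ENNReal.ofReal ((u - u*t)^(a-1) * (u*t)^(c-1)) =
      ENNReal.ofReal (u^(a+c-1)) * ENNReal.ofReal ((1-t)^(a-1) * t^(c-1)) := by
    intro t ht
    rw [← ENNReal.ofReal_mul (abs_nonneg u), ← ENNReal.ofReal_mul (Real.rpow_nonneg hu.le _)]
    congr 1
    have h1t : (0:ℝ) ≤ 1 - t := by linarith [ht.2]
    rw [abs_of_pos hu, show u - u*t = u * (1-t) by ring,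
      Real.mul_rpow hu.le h1t, Real.mul_rpow hu.le ht.1.le]
    rw [show u^(a+c-1) = u^(a-1) * u^(c-1) * u by
      rw [show a+c-1 = (a-1)+(c-1)+1 by ring, Real.rpow_add hu, Real.rpow_add hu, Real.rpow_one]]
    ring
  calc ∫⁻ t in Ioo (0:ℝ) 1, ENNReal.ofReal |u| * ENNReal.ofReal ((u - u*t)^(a-1) * (u*t)^(c-1))
      = ∫⁻ t in Ioo (0:ℝ) 1, ENNReal.ofReal (u^(a+c-1)) * ENNReal.ofReal ((1-t)^(a-1) * t^(c-1)) := by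
        refine setLIntegral_congr_fun measurableSet_Ioo ?_
        exact hpt
    _ = ENNReal.ofReal (u^(a+c-1)) * ∫⁻ t in Ioo (0:ℝ) 1, ENNReal.ofReal ((1-t)^(a-1) * t^(c-1)) :=
        lintegral_const_mul' _ _ ENNReal.ofReal_ne_top
    _ ≤ ENNReal.ofReal (u^(a+c-1)) *
          ENNReal.ofReal (Real.Gamma a * Real.Gamma c / Real.Gamma (a+c)) := by
        gcongr
        rw [← betaLintegral ha hc]
        exact lintegral_mono_set Ioo_subset_Ioc_self
    _ = _ := (ENNReal.ofReal_mul (Real.rpow_nonneg hu.le _)).symm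

/-- Beta lemma 1: `∫_s^1 (u-s)^(a-1) u^(-(a+c)) du ≤ s^(-c) B(a,c)` for `0 < s`. -/
lemma beta1 {a c : ℝ} (ha : 0 < a) (hc : 0 < c) {s : ℝ} (hs : 0 < s) :
    ∫⁻ u in Ioc s 1, ENNReal.ofReal ((u-s)^(a-1) * u^(-(a+c))) ≤
      ENNReal.ofReal (s^(-c) * (Real.Gamma a * Real.Gamma c / Real.Gamma (a+c))) := by
  rcases le_or_gt 1 s with hs1 | hs1
  · rw [Ioc_eq_empty (by exact not_lt.mpr hs1), Measure.restrict_empty, lintegral_zero_measure]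
    exact zero_le
  rw [setLIntegral_congr (Ioo_ae_eq_Ioc (a := s) (b := 1)).symm]
  have key : ∀ x : ℝ, x ∈ Ioo s 1 → s / x ∈ Ioo s 1 := by
    rintro x ⟨h1, h2⟩
    have hx0 : 0 < x := lt_trans hs h1
    exact ⟨(lt_div_iff₀ hx0).mpr (by nlinarith), (div_lt_one hx0).mpr h1⟩
  have himg : (fun t : ℝ => s / t) '' (Ioo s 1) = Ioo s 1 := by
    ext x
    simp only [mem_image]
    constructor
    · rintro ⟨t, ht, rfl⟩; exact key t ht
    · intro hx
      have hx0 : 0 < x := lt_trans hs hx.1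
      exact ⟨s / x, key x hx, by field_simp⟩
  have hderiv : ∀ t ∈ Ioo s 1,
      HasDerivWithinAt (fun t : ℝ => s / t) (-(s / t^2)) (Ioo s 1) t := by
    intro t ht
    have ht0 : t ≠ 0 := (lt_trans hs ht.1).ne'
    have h := ((hasDerivAt_inv ht0).const_mul s).hasDerivWithinAt (s := Ioo s 1)
    have : (fun x : ℝ => s * x⁻¹) = fun x : ℝ => s / x := funext fun x => (div_eq_mul_inv s x).symm
    rw [this] at h
    exact h.congr_deriv (by ring)
  have hinj : InjOn (fun t : ℝ => s / t) (Ioo s 1) := by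
    intro x hx y hy h
    have hx0 : x ≠ 0 := (lt_trans hs hx.1).ne'
    have hy0 : y ≠ 0 := (lt_trans hs hy.1).ne'
    field_simp at h
    exact h.symm
  conv_lhs => rw [← himg]
  rw [lintegral_image_deriv measurableSet_Ioo hderiv hinj]
  have hpt : ∀ t ∈ Ioo s 1,
      ENNReal.ofReal |(-(s / t^2))| * ENNReal.ofReal ((s/t - s)^(a-1) * (s/t)^(-(a+c))) =
      ENNReal.ofReal (s^(-c)) * ENNReal.ofReal ((1-t)^(a-1) * t^(c-1)) := by
    intro t ht
    have ht0 : 0 < t := lt_trans hs ht.1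
    have h1t : (0:ℝ) < 1 - t := by linarith [ht.2]
    rw [← ENNReal.ofReal_mul (abs_nonneg _), ← ENNReal.ofReal_mul (Real.rpow_nonneg hs.le _)]
    congr 1
    have d0 : |(-(s / t^2))| = s^(1:ℝ) * t^(-2:ℝ) := by
      rw [abs_neg, abs_of_pos (by positivity), Real.rpow_one, Real.rpow_neg ht0.le,
        show ((2:ℝ)) = ((2:ℕ):ℝ) by norm_num, Real.rpow_natCast, div_eq_mul_inv]
    have d1 : (s/t - s)^(a-1) = s^(a-1) * (1-t)^(a-1) * t^(-(a-1)) := by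
      rw [show s/t - s = s * (1-t) / t by field_simp,
        Real.div_rpow (mul_nonneg hs.le h1t.le) ht0.le, Real.mul_rpow hs.le h1t.le,
        Real.rpow_neg ht0.le, div_eq_mul_inv]
    have d2 : (s/t)^(-(a+c)) = s^(-(a+c)) * t^(a+c) := by
      rw [Real.rpow_neg (div_nonneg hs.le ht0.le), Real.div_rpow hs.le ht0.le, inv_div,
        div_eq_mul_inv, Real.rpow_neg hs.le, mul_comm]
    have hS : s^(1:ℝ) * s^(a-1) * s^(-(a+c)) = s^(-c) := by
      rw [← Real.rpow_add hs, ← Real.rpow_add hs]; congr 1; ring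
    have hT : t^(-2:ℝ) * t^(-(a-1)) * t^(a+c) = t^(c-1) := by
      rw [← Real.rpow_add ht0, ← Real.rpow_add ht0]; congr 1; ring
    calc |(-(s / t^2))| * ((s/t - s)^(a-1) * (s/t)^(-(a+c)))
        = (s^(1:ℝ) * s^(a-1) * s^(-(a+c))) * ((t^(-2:ℝ) * t^(-(a-1)) * t^(a+c)) * (1-t)^(a-1)) := by
          rw [d0, d1, d2]; ring
      _ = s^(-c) * ((1-t)^(a-1) * t^(c-1)) := by rw [hS, hT]; ring
  calc ∫⁻ t in Ioo s 1, ENNReal.ofReal |(-(s / t^2))| *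
          ENNReal.ofReal ((s/t - s)^(a-1) * (s/t)^(-(a+c)))
      = ∫⁻ t in Ioo s 1, ENNReal.ofReal (s^(-c)) * ENNReal.ofReal ((1-t)^(a-1) * t^(c-1)) :=
        setLIntegral_congr_fun measurableSet_Ioo hpt
    _ = ENNReal.ofReal (s^(-c)) * ∫⁻ t in Ioo s 1, ENNReal.ofReal ((1-t)^(a-1) * t^(c-1)) :=
        lintegral_const_mul' _ _ ENNReal.ofReal_ne_top
    _ ≤ ENNReal.ofReal (s^(-c)) *
          ENNReal.ofReal (Real.Gamma a * Real.Gamma c / Real.Gamma (a+c)) := by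
        gcongr
        rw [← betaLintegral ha hc]
        refine lintegral_mono_set fun x hx => ?_
        exact ⟨lt_trans hs hx.1, hx.2.le⟩
    _ = _ := (ENNReal.ofReal_mul (Real.rpow_nonneg hs.le _)).symm

lemma schur {a : ℝ} (ha : 0 < a) {q : ℝ} (hq : 1 ≤ q) {G : ℝ → ℝ≥0∞} (hG : Measurable G) :
    ∫⁻ s in Ioc (0:ℝ) 1,
        (∫⁻ u in Ioc s 1, ENNReal.ofReal ((u-s)^(a-1) * u^(-a)) * G u) ^ q
      ≤ ENNReal.ofReal (Real.Gamma a * Real.Gamma (1/q) / Real.Gamma (a + 1/q)) ^ q *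
        ∫⁻ u in Ioc (0:ℝ) 1, G u ^ q := by
  have hq0 : (0:ℝ) < q := lt_of_lt_of_le one_pos hq
  set c : ℝ := 1/q with hcdef
  have hc0 : 0 < c := by rw [hcdef]; exact one_div_pos.mpr hq0
  have hcq : c * q = 1 := by rw [hcdef]; field_simp
  set B0 : ℝ := Real.Gamma a * Real.Gamma c / Real.Gamma (a+c) with hB0def
  have hB0 : 0 < B0 := div_pos (mul_pos (Real.Gamma_pos_of_pos ha) (Real.Gamma_pos_of_pos hc0))
    (Real.Gamma_pos_of_pos (by linarith))
  set K : ℝ → ℝ → ℝ≥0∞ := fun s u => ENNReal.ofReal ((u-s)^(a-1) * u^(-a)) with hKdef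
  have hKm : ∀ s, Measurable (K s) := fun s =>
    (((measurable_id.sub_const s).pow_const _).mul (measurable_id.pow_const _)).ennreal_ofReal
  set X : ℝ → ℝ≥0∞ := fun u => ENNReal.ofReal (u^(1-c)) * G u ^ q with hXdef
  have hXm : Measurable X := ((measurable_id.pow_const _).ennreal_ofReal).mul (hG.pow_const _)
  -- Step H
  have stepH : ∀ s ∈ Ioc (0:ℝ) 1,
      (∫⁻ u in Ioc s 1, K s u * G u) ^ q ≤
        ENNReal.ofReal (s^(-c) * B0) ^ (q-1) * ∫⁻ u in Ioc s 1, K s u * X u := by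
    intro s hs
    rcases hq.eq_or_lt with hq1 | hq1
    · -- q = 1
      have hc1 : c = 1 := by rw [hcdef, ← hq1]; norm_num
      have : ∀ u, K s u * X u = K s u * G u := by
        intro u
        rw [hXdef]
        simp [hc1, Real.rpow_zero, ← hq1]
      simp only [this]
      rw [← hq1]
      simp [ENNReal.rpow_one]
    · -- 1 < q
      have hc1 : c < 1 := by rw [hcdef]; rw [div_lt_one hq0]; exact hq1
      have hpq : ((1-c)⁻¹).HolderConjugate c⁻¹ :=
        Real.HolderConjugate.one_sub_inv_inv hc0 hc1
      have hcq' : c⁻¹ = q := by rw [hcdef]; field_simp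
      rw [hcq'] at hpq
      have h1c0 : (0:ℝ) < 1 - c := by linarith
      set fφ : ℝ → ℝ≥0∞ := fun u => ENNReal.ofReal (u ^ (-(c*(1-c)))) with hfφdef
      set gφ : ℝ → ℝ≥0∞ := fun u => ENNReal.ofReal (u ^ (c*(1-c))) * G u with hgφdef
      have hfφm : Measurable fφ := (measurable_id.pow_const _).ennreal_ofReal
      have hgφm : Measurable gφ := ((measurable_id.pow_const _).ennreal_ofReal).mul hG
      set μs := (volume.restrict (Ioc s 1)).withDensity (K s) with hμsdef
      have h1 : ∫⁻ u in Ioc s 1, K s u * G u = ∫⁻ u, fφ u * gφ u ∂μs := by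
        rw [hμsdef, show (fun u => fφ u * gφ u) = fφ * gφ from rfl,
          lintegral_withDensity_eq_lintegral_mul _ (hKm s) (hfφm.mul hgφm)]
        refine (setLIntegral_congr_fun measurableSet_Ioc (
          fun u hu => ?_)).symm
        have hu0 : 0 < u := lt_trans hs.1 hu.1
        simp only [Pi.mul_apply, hfφdef, hgφdef]
        rw [← mul_assoc (ENNReal.ofReal (u ^ (-(c * (1 - c))))),
          ← ENNReal.ofReal_mul (Real.rpow_nonneg hu0.le _),
          ← Real.rpow_add hu0, neg_add_cancel, Real.rpow_zero, ENNReal.ofReal_one, one_mul]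
      have h2 := ENNReal.lintegral_mul_le_Lp_mul_Lq μs hpq hfφm.aemeasurable hgφm.aemeasurable
      have h3 : ∫⁻ u, fφ u ^ ((1-c)⁻¹) ∂μs ≤ ENNReal.ofReal (s^(-c) * B0) := by
        rw [hμsdef, lintegral_withDensity_eq_lintegral_mul _ (hKm s)
          (hfφm.pow_const _)]
        refine le_trans (le_of_eq (setLIntegral_congr_fun measurableSet_Ioc
          (fun u hu => ?_))) (beta1 ha hc0 hs.1)
        have hu0 : 0 < u := lt_trans hs.1 hu.1
        simp only [Pi.mul_apply, Pi.pow_apply, hfφdef]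
        rw [ENNReal.ofReal_rpow_of_nonneg (Real.rpow_nonneg hu0.le _)
            (by positivity : (0:ℝ) ≤ (1-c)⁻¹),
          ← Real.rpow_mul hu0.le,
          (show -(c*(1-c)) * (1-c)⁻¹ = -c by field_simp),
          show K s u = ENNReal.ofReal ((u-s)^(a-1) * u^(-a)) from rfl,
          ← ENNReal.ofReal_mul (mul_nonneg (Real.rpow_nonneg (by linarith [hu.1, hs.1] : (0:ℝ) ≤ u - s) _) (Real.rpow_nonneg hu0.le _)),
          mul_assoc, ← Real.rpow_add hu0, (show -a + -c = -(a+c) by ring)]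
      have h4 : ∫⁻ u, gφ u ^ q ∂μs = ∫⁻ u in Ioc s 1, K s u * X u := by
        rw [hμsdef, lintegral_withDensity_eq_lintegral_mul _ (hKm s) (hgφm.pow_const _)]
        refine setLIntegral_congr_fun measurableSet_Ioc (
          fun u hu => ?_)
        have hu0 : 0 < u := lt_trans hs.1 hu.1
        simp only [Pi.mul_apply, Pi.pow_apply, hgφdef, hXdef]
        rw [ENNReal.mul_rpow_of_nonneg _ _ hq0.le,
          ENNReal.ofReal_rpow_of_nonneg (Real.rpow_nonneg hu0.le _) hq0.le,
          ← Real.rpow_mul hu0.le,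
          (show c*(1-c) * q = 1 - c by rw [mul_comm c (1-c), mul_assoc, hcq, mul_one])]
      -- combine
      have hT : ∫⁻ u in Ioc s 1, K s u * G u ≤
          ENNReal.ofReal (s^(-c) * B0) ^ (1-c) * (∫⁻ u in Ioc s 1, K s u * X u) ^ (1/q) := by
        rw [h1, ← h4]
        refine le_trans (le_of_eq (by rfl)) (le_trans h2 ?_)
        rw [one_div, inv_inv]
        gcongr
      calc (∫⁻ u in Ioc s 1, K s u * G u) ^ q
          ≤ (ENNReal.ofReal (s^(-c) * B0) ^ (1-c) *
              (∫⁻ u in Ioc s 1, K s u * X u) ^ (1/q)) ^ q :=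
            ENNReal.rpow_le_rpow hT hq0.le
        _ = ENNReal.ofReal (s^(-c) * B0) ^ (q-1) * ∫⁻ u in Ioc s 1, K s u * X u := by
            rw [ENNReal.mul_rpow_of_nonneg _ _ hq0.le, ← ENNReal.rpow_mul,
              ← ENNReal.rpow_mul,
              (show (1-c) * q = q - 1 by rw [sub_mul, one_mul, mul_comm c q]; rw [mul_comm q c, hcq]),
              (show 1/q * q = 1 by field_simp), ENNReal.rpow_one]
  -- Tonelli and conclusion
  set S : Set (ℝ×ℝ) := ({p | 0 < p.1} ∩ {p | p.1 < p.2}) ∩ {p | p.2 ≤ 1} with hSdef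
  have hSm : MeasurableSet S :=
    ((measurableSet_lt measurable_const measurable_fst).inter
      (measurableSet_lt measurable_fst measurable_snd)).inter
      (measurableSet_le measurable_snd measurable_const)
  set H2 : ℝ × ℝ → ℝ≥0∞ := fun p => ENNReal.ofReal (p.1^(c-1)) * (K p.1 p.2 * X p.2) with hH2def
  have hH2m : Measurable H2 :=
    ((measurable_fst.pow_const _).ennreal_ofReal).mul
      ((((((measurable_snd.sub measurable_fst).pow_const _)).mul
        (measurable_snd.pow_const _)).ennreal_ofReal).mul (hXm.comp measurable_snd))
  have hIm : Measurable (S.indicator H2) := hH2m.indicator hSm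
  have step1 : ∫⁻ s in Ioc (0:ℝ) 1, ENNReal.ofReal (s^(c-1)) * ∫⁻ u in Ioc s 1, K s u * X u
      = ∫⁻ s, ∫⁻ u, S.indicator H2 (s, u) := by
    rw [← lintegral_indicator measurableSet_Ioc]
    refine lintegral_congr fun s => ?_
    by_cases hs : s ∈ Ioc (0:ℝ) 1
    · rw [indicator_of_mem hs, ← lintegral_const_mul' _ _ ENNReal.ofReal_ne_top,
        ← lintegral_indicator measurableSet_Ioc]
      refine lintegral_congr fun u => ?_
      by_cases hu : u ∈ Ioc s 1
      · rw [indicator_of_mem hu, indicator_of_mem (show (s,u) ∈ S from ⟨⟨hs.1, hu.1⟩, hu.2⟩)]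
      · rw [indicator_of_notMem hu,
          indicator_of_notMem (fun hmem => hu ⟨hmem.1.2, hmem.2⟩)]
    · rw [indicator_of_notMem hs]
      have hz : ∀ u : ℝ, S.indicator H2 (s, u) = 0 := fun u =>
        indicator_of_notMem (fun hmem => hs ⟨hmem.1.1, le_trans hmem.1.2.le hmem.2⟩) _
      simp [hz]
  have step2 : ∫⁻ s, ∫⁻ u, S.indicator H2 (s, u) = ∫⁻ u, ∫⁻ s, S.indicator H2 (s, u) :=
    lintegral_lintegral_swap hIm.aemeasurable
  have step3 : ∫⁻ u, ∫⁻ s, S.indicator H2 (s, u) =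
      ∫⁻ u in Ioc (0:ℝ) 1, ∫⁻ s in Ioo 0 u, ENNReal.ofReal (s^(c-1)) * (K s u * X u) := by
    rw [← lintegral_indicator measurableSet_Ioc]
    refine lintegral_congr fun u => ?_
    by_cases hu : u ∈ Ioc (0:ℝ) 1
    · rw [indicator_of_mem hu, ← lintegral_indicator measurableSet_Ioo]
      refine lintegral_congr fun t => ?_
      by_cases hsu : t ∈ Ioo (0:ℝ) u
      · rw [indicator_of_mem (show (t,u) ∈ S from ⟨⟨hsu.1, hsu.2⟩, hu.2⟩),
          indicator_of_mem hsu]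
      · rw [indicator_of_notMem (fun hmem => hsu ⟨hmem.1.1, hmem.1.2⟩),
          indicator_of_notMem hsu]
    · rw [indicator_of_notMem hu]
      have hz : ∀ t : ℝ, S.indicator H2 (t, u) = 0 := fun t =>
        indicator_of_notMem (fun hmem => hu ⟨lt_trans hmem.1.1 hmem.1.2, hmem.2⟩) _
      simp [hz]
  have step4 : ∀ u ∈ Ioc (0:ℝ) 1,
      ∫⁻ s in Ioo (0:ℝ) u, ENNReal.ofReal (s^(c-1)) * (K s u * X u) ≤
        ENNReal.ofReal B0 * G u ^ q := by
    intro u hu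
    have hu0 : 0 < u := hu.1
    have e1 : ∀ s ∈ Ioo (0:ℝ) u, ENNReal.ofReal (s^(c-1)) * (K s u * X u)
        = (X u * ENNReal.ofReal (u^(-a))) * ENNReal.ofReal ((u-s)^(a-1) * s^(c-1)) := by
      intro s hsu
      show ENNReal.ofReal (s^(c-1)) * (ENNReal.ofReal ((u-s)^(a-1) * u^(-a)) * X u) = _
      rw [ENNReal.ofReal_mul (Real.rpow_nonneg (by linarith [hsu.2] : (0:ℝ) ≤ u - s) _),
          ENNReal.ofReal_mul (Real.rpow_nonneg (by linarith [hsu.2] : (0:ℝ) ≤ u - s) _)]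
      ring
    calc ∫⁻ s in Ioo (0:ℝ) u, ENNReal.ofReal (s^(c-1)) * (K s u * X u)
        = ∫⁻ s in Ioo (0:ℝ) u, (X u * ENNReal.ofReal (u^(-a))) *
            ENNReal.ofReal ((u-s)^(a-1) * s^(c-1)) :=
          setLIntegral_congr_fun measurableSet_Ioo e1
      _ = (X u * ENNReal.ofReal (u^(-a))) *
            ∫⁻ s in Ioo (0:ℝ) u, ENNReal.ofReal ((u-s)^(a-1) * s^(c-1)) :=
          lintegral_const_mul _
            ((((measurable_const.sub measurable_id).pow_const _).mul
              (measurable_id.pow_const _)).ennreal_ofReal)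
      _ ≤ (X u * ENNReal.ofReal (u^(-a))) * ENNReal.ofReal (u^(a+c-1) * B0) := by
          gcongr
          exact beta2 ha hc0 hu0
      _ = ENNReal.ofReal B0 * G u ^ q := by
          rw [hXdef]
          simp only []
          rw [ENNReal.ofReal_mul (Real.rpow_nonneg hu0.le _)]
          have hone : ENNReal.ofReal (u^(1-c)) * ENNReal.ofReal (u^(-a)) *
              ENNReal.ofReal (u^(a+c-1)) = 1 := by
            rw [← ENNReal.ofReal_mul (Real.rpow_nonneg hu0.le _),
              ← ENNReal.ofReal_mul (mul_nonneg (Real.rpow_nonneg hu0.le _)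
                (Real.rpow_nonneg hu0.le _)),
              ← Real.rpow_add hu0, ← Real.rpow_add hu0,
              (show (1-c) + -a + (a+c-1) = 0 by ring), Real.rpow_zero, ENNReal.ofReal_one]
          calc ENNReal.ofReal (u^(1-c)) * G u ^ q * ENNReal.ofReal (u^(-a)) *
                (ENNReal.ofReal (u^(a+c-1)) * ENNReal.ofReal B0)
              = (ENNReal.ofReal (u^(1-c)) * ENNReal.ofReal (u^(-a)) *
                  ENNReal.ofReal (u^(a+c-1))) * (ENNReal.ofReal B0 * G u ^ q) := by ring
            _ = ENNReal.ofReal B0 * G u ^ q := by rw [hone, one_mul]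
  have hx0 : (ENNReal.ofReal B0) ≠ 0 := (ENNReal.ofReal_pos.mpr hB0).ne'
  calc ∫⁻ s in Ioc (0:ℝ) 1, (∫⁻ u in Ioc s 1, K s u * G u) ^ q
      ≤ ∫⁻ s in Ioc (0:ℝ) 1,
          ENNReal.ofReal (s^(-c) * B0) ^ (q-1) * ∫⁻ u in Ioc s 1, K s u * X u := by
        refine lintegral_mono_ae ?_
        filter_upwards [ae_restrict_mem measurableSet_Ioc] with s hs using stepH s hs
    _ = ∫⁻ s in Ioc (0:ℝ) 1, ENNReal.ofReal B0 ^ (q-1) *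
          (ENNReal.ofReal (s^(c-1)) * ∫⁻ u in Ioc s 1, K s u * X u) := by
        refine setLIntegral_congr_fun measurableSet_Ioc (
          fun s hs => ?_)
        rw [ENNReal.ofReal_mul (Real.rpow_nonneg hs.1.le _),
          ENNReal.mul_rpow_of_nonneg _ _ (by linarith : (0:ℝ) ≤ q-1),
          ENNReal.ofReal_rpow_of_nonneg (Real.rpow_nonneg hs.1.le _) (by linarith),
          ← Real.rpow_mul hs.1.le,
          (show -c * (q-1) = c - 1 by rw [neg_mul, mul_sub, mul_one, hcq]; ring)]
        ring
    _ = ENNReal.ofReal B0 ^ (q-1) *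
          ∫⁻ s in Ioc (0:ℝ) 1, ENNReal.ofReal (s^(c-1)) * ∫⁻ u in Ioc s 1, K s u * X u :=
        lintegral_const_mul' _ _ (ENNReal.rpow_ne_top_of_nonneg (by linarith)
          ENNReal.ofReal_ne_top)
    _ = ENNReal.ofReal B0 ^ (q-1) *
          ∫⁻ u in Ioc (0:ℝ) 1, ∫⁻ s in Ioo (0:ℝ) u,
            ENNReal.ofReal (s^(c-1)) * (K s u * X u) := by
        rw [step1, step2, step3]
    _ ≤ ENNReal.ofReal B0 ^ (q-1) * ∫⁻ u in Ioc (0:ℝ) 1, ENNReal.ofReal B0 * G u ^ q := by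
        refine mul_le_mul_right (lintegral_mono_ae ?_) _
        filter_upwards [ae_restrict_mem measurableSet_Ioc] with u hu using step4 u hu
    _ = ENNReal.ofReal B0 ^ q * ∫⁻ u in Ioc (0:ℝ) 1, G u ^ q := by
        rw [lintegral_const_mul' _ _ ENNReal.ofReal_ne_top, ← mul_assoc]
        congr 1
        rw [show ENNReal.ofReal B0 ^ (q-1) * ENNReal.ofReal B0
            = ENNReal.ofReal B0 ^ (q-1) * ENNReal.ofReal B0 ^ (1:ℝ) by rw [ENNReal.rpow_one],
          ← ENNReal.rpow_add _ _ hx0 ENNReal.ofReal_ne_top, sub_add_cancel]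


/-- For `Re α > 0` and `1 ≤ p < ∞`, the dual Cesàro-Hardy operator
`C_α^* f(s) = α ∫_s^1 (u-s)^{α-1} u^{-α} f(u) du` is bounded on `L^p[0,1]` with
`‖C_α^* f‖_p ≤ |α| Γ(Re α) Γ(1/p) / Γ(Re α + 1/p) ‖f‖_p`. -/
theorem stmt17 (p : ℝ≥0∞) (hp : 1 ≤ p) (hp' : p ≠ ∞) (alpha : ℂ) (ha : 0 < alpha.re)
    (f : ℝ → ℂ) (hf : MemLp f p (volume.restrict (Ioc (0:ℝ) 1))) :
    let C : ℝ → ℂ := fun s =>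
      alpha * ∫ u in Ioc s 1, ((u - s : ℝ) : ℂ) ^ (alpha - 1) / (u : ℂ) ^ alpha * f u
    MemLp C p (volume.restrict (Ioc (0:ℝ) 1)) ∧
    eLpNorm C p (volume.restrict (Ioc (0:ℝ) 1)) ≤
      ENNReal.ofReal (‖alpha‖ * Real.Gamma alpha.re *
          Real.Gamma (1 / p.toReal) / Real.Gamma (alpha.re + 1 / p.toReal)) *
        eLpNorm f p (volume.restrict (Ioc (0:ℝ) 1)) := by
  intro C
  set μ := volume.restrict (Ioc (0:ℝ) 1) with hμdef
  set a : ℝ := alpha.re with hadef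
  have hq1 : (1:ℝ) ≤ p.toReal := by
    have := ENNReal.toReal_mono hp' hp
    simpa using this
  set q : ℝ := p.toReal with hqdef
  have hq0 : (0:ℝ) < q := lt_of_lt_of_le one_pos hq1
  have hp0 : p ≠ 0 := (lt_of_lt_of_le one_pos hp).ne'
  -- measurable representative
  set f' : ℝ → ℂ := hf.1.mk f with hf'def
  have hf'm : StronglyMeasurable f' := hf.1.stronglyMeasurable_mk
  have hff' : f =ᵐ[μ] f' := hf.1.ae_eq_mk
  set G : ℝ → ℝ≥0∞ := fun u => (‖f' u‖₊ : ℝ≥0∞) with hGdef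
  have hGm : Measurable G := hf'm.measurable.nnnorm.coe_nnreal_ennreal
  set C' : ℝ → ℂ := fun s =>
    alpha * ∫ u in Ioc s 1, ((u - s : ℝ) : ℂ) ^ (alpha - 1) / (u : ℂ) ^ alpha * f' u with hC'def
  have hCC' : ∀ s ∈ Ioc (0:ℝ) 1, C s = C' s := by
    intro s hs
    show alpha * _ = alpha * _
    congr 1
    refine integral_congr_ae ?_
    have hsub : Ioc s 1 ⊆ Ioc (0:ℝ) 1 := fun x hx => ⟨lt_trans hs.1 hx.1, hx.2⟩
    filter_upwards [ae_restrict_of_ae_restrict_of_subset hsub hff'] with u hu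
    rw [hu]
  -- strong measurability
  set T : Set (ℝ × ℝ) := {z : ℝ × ℝ | z.1 < z.2} ∩ {z : ℝ × ℝ | z.2 ≤ 1} with hTdef
  have hTm : MeasurableSet T :=
    (measurableSet_lt measurable_fst measurable_snd).inter
      (measurableSet_le measurable_snd measurable_const)
  set Fp : ℝ × ℝ → ℂ := T.indicator (fun z =>
    ((z.2 - z.1 : ℝ) : ℂ) ^ (alpha - 1) / (z.2 : ℂ) ^ alpha * f' z.2) with hFpdef
  have hFpm : StronglyMeasurable Fp := by
    refine (Measurable.stronglyMeasurable ?_).indicator hTm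
    exact (((Complex.measurable_ofReal.comp (measurable_snd.sub measurable_fst)).pow
      measurable_const).div ((Complex.measurable_ofReal.comp measurable_snd).pow
      measurable_const)).mul (hf'm.measurable.comp measurable_snd)
  have hC'' : StronglyMeasurable (fun s => alpha * ∫ u, Fp (s, u)) :=
    (stronglyMeasurable_const.mul hFpm.integral_prod_right')
  have hC'eq : ∀ s, C' s = alpha * ∫ u, Fp (s, u) := by
    intro s
    show alpha * _ = alpha * _
    congr 1
    rw [← integral_indicator measurableSet_Ioc]
    refine integral_congr_ae (Filter.Eventually.of_forall fun u => ?_)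
    simp only [hFpdef, indicator_apply]
    by_cases hu : u ∈ Ioc s 1
    · rw [if_pos hu, if_pos (show (s,u) ∈ T from ⟨hu.1, hu.2⟩)]
    · rw [if_neg hu, if_neg (show (s,u) ∉ T from fun hz => hu ⟨hz.1, hz.2⟩)]
  have hCsm : AEStronglyMeasurable C μ := by
    refine ⟨fun s => alpha * ∫ u, Fp (s, u), hC'', ?_⟩
    filter_upwards [ae_restrict_mem measurableSet_Ioc] with s hs
    rw [hCC' s hs, hC'eq s]
  -- pointwise bound
  have hptw : ∀ s ∈ Ioc (0:ℝ) 1, (‖C s‖₊ : ℝ≥0∞) ≤ (‖alpha‖₊ : ℝ≥0∞) *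
      ∫⁻ u in Ioc s 1, ENNReal.ofReal ((u-s)^(a-1) * u^(-a)) * G u := by
    intro s hs
    rw [hCC' s hs]
    show (‖alpha * _‖₊ : ℝ≥0∞) ≤ _
    rw [nnnorm_mul, ENNReal.coe_mul]
    refine mul_le_mul_right (le_trans (enorm_integral_le_lintegral_enorm _) (le_of_eq ?_)) _
    refine setLIntegral_congr_fun measurableSet_Ioc (fun u hu => ?_)
    have hu0 : 0 < u := lt_trans hs.1 hu.1
    have hus : 0 < u - s := by linarith [hu.1]
    rw [← ofReal_norm, norm_mul, norm_div,
      Complex.norm_cpow_eq_rpow_re_of_pos hus,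
      Complex.norm_cpow_eq_rpow_re_of_pos hu0,
      (show (alpha - 1).re = a - 1 by rw [Complex.sub_re, Complex.one_re]),
      ← hadef, ENNReal.ofReal_mul (by positivity), ofReal_norm, enorm_eq_nnnorm]
    congr 2
    rw [Real.rpow_neg hu0.le, div_eq_mul_inv]
  -- eLpNorm bound
  have hBnn : (0:ℝ) ≤ Real.Gamma a * Real.Gamma (1/q) / Real.Gamma (a + 1/q) := by
    have h1 := Real.Gamma_pos_of_pos ha
    have h2 := Real.Gamma_pos_of_pos (show (0:ℝ) < 1/q by positivity)
    have h3 := Real.Gamma_pos_of_pos (show (0:ℝ) < a + 1/q by positivity)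
    positivity
  have key : eLpNorm C p μ ≤
      ((‖alpha‖₊ : ℝ≥0∞) * ENNReal.ofReal (Real.Gamma a * Real.Gamma (1/q) /
        Real.Gamma (a + 1/q))) * eLpNorm f p μ := by
    rw [eLpNorm_eq_lintegral_rpow_enorm_toReal hp0 hp', ← hqdef]
    have hmain : ∫⁻ s, (‖C s‖₊ : ℝ≥0∞) ^ q ∂μ ≤
        ((‖alpha‖₊ : ℝ≥0∞) * ENNReal.ofReal (Real.Gamma a * Real.Gamma (1/q) /
          Real.Gamma (a + 1/q))) ^ q * ∫⁻ u, G u ^ q ∂μ := by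
      calc ∫⁻ s, (‖C s‖₊ : ℝ≥0∞) ^ q ∂μ
          ≤ ∫⁻ s in Ioc (0:ℝ) 1, ((‖alpha‖₊ : ℝ≥0∞) *
              ∫⁻ u in Ioc s 1, ENNReal.ofReal ((u-s)^(a-1) * u^(-a)) * G u) ^ q := by
            refine lintegral_mono_ae ?_
            filter_upwards [ae_restrict_mem measurableSet_Ioc] with s hs
            exact ENNReal.rpow_le_rpow (hptw s hs) hq0.le
        _ = (‖alpha‖₊ : ℝ≥0∞) ^ q * ∫⁻ s in Ioc (0:ℝ) 1,
              (∫⁻ u in Ioc s 1, ENNReal.ofReal ((u-s)^(a-1) * u^(-a)) * G u) ^ q := by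
            rw [← lintegral_const_mul' _ _ (ENNReal.rpow_ne_top_of_nonneg hq0.le
              ENNReal.coe_ne_top)]
            refine lintegral_congr fun s => ?_
            rw [ENNReal.mul_rpow_of_nonneg _ _ hq0.le]
        _ ≤ (‖alpha‖₊ : ℝ≥0∞) ^ q * (ENNReal.ofReal (Real.Gamma a * Real.Gamma (1/q) /
              Real.Gamma (a + 1/q)) ^ q * ∫⁻ u in Ioc (0:ℝ) 1, G u ^ q) :=
            mul_le_mul_right (schur ha hq1 hGm) _
        _ = ((‖alpha‖₊ : ℝ≥0∞) * ENNReal.ofReal (Real.Gamma a * Real.Gamma (1/q) /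
              Real.Gamma (a + 1/q))) ^ q * ∫⁻ u, G u ^ q ∂μ := by
            rw [ENNReal.mul_rpow_of_nonneg _ _ hq0.le, mul_assoc]
    calc (∫⁻ s, (‖C s‖₊ : ℝ≥0∞) ^ q ∂μ) ^ (1/q)
        ≤ (((‖alpha‖₊ : ℝ≥0∞) * ENNReal.ofReal (Real.Gamma a * Real.Gamma (1/q) /
            Real.Gamma (a + 1/q))) ^ q * ∫⁻ u, G u ^ q ∂μ) ^ (1/q) :=
          ENNReal.rpow_le_rpow hmain (by positivity)
      _ = ((‖alpha‖₊ : ℝ≥0∞) * ENNReal.ofReal (Real.Gamma a * Real.Gamma (1/q) /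
            Real.Gamma (a + 1/q))) * (∫⁻ u, G u ^ q ∂μ) ^ (1/q) := by
          rw [ENNReal.mul_rpow_of_nonneg _ _ (by positivity : (0:ℝ) ≤ 1/q),
            ← ENNReal.rpow_mul, mul_one_div, div_self hq0.ne', ENNReal.rpow_one]
      _ = _ := by
          congr 1
          rw [eLpNorm_congr_ae hff', eLpNorm_eq_lintegral_rpow_enorm_toReal hp0 hp', ← hqdef]
          rfl
  constructor
  · exact ⟨hCsm, lt_of_le_of_lt key (ENNReal.mul_lt_top
      (ENNReal.mul_lt_top ENNReal.coe_lt_top ENNReal.ofReal_lt_top) hf.2)⟩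
  · refine le_trans key (le_of_eq ?_)
    congr 1
    rw [← enorm_eq_nnnorm, ← ofReal_norm,
      ← ENNReal.ofReal_mul (norm_nonneg alpha)]
    congr 1
    rw [hadef]
    ring
end

section
/- For t > 0, λ ∈ ℂ with Re λ < -1/2, and m ∈ ℕ, the function g_λ(s) log^m(s) lies in L^2[0,1] and T(t)(g_λ log^m) = e^{λt} g_λ · Σ_{j=0}^m binom(m,j) (-t)^{m-j} log^j; consequently (e^{λt} - T(t))^{m+1} annihilates g_λ log^m, i.e., g_λ log^m belongs to the (m+1)-st generalized eigenspace of T(t) for the eigenvalue e^{λt}. -/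
open MeasureTheory Set
open scoped ENNReal

section Aux
open Polynomial

lemma keycpow (t : ℝ) {s : ℝ} (hs : 0 < s) (w : ℂ) (lam : ℂ) (hw : w = -(lam+1)) :
    (Real.exp (-t) : ℂ) * (↑(Real.exp (-t) * s) : ℂ) ^ w =
      Complex.exp (lam * t) * (s : ℂ) ^ w := by
  rw [Complex.ofReal_mul, Complex.mul_cpow_ofReal_nonneg (Real.exp_pos _).le hs.le]
  rw [show ((Real.exp (-t) : ℝ) : ℂ) ^ w = Complex.exp ((-t : ℂ) * w) by
    rw [Complex.cpow_def_of_ne_zero (by exact_mod_cast (Real.exp_ne_zero _)),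
      ← Complex.ofReal_log (Real.exp_pos _).le, Real.log_exp, Complex.ofReal_neg]]
  rw [Complex.ofReal_exp, ← mul_assoc, ← Complex.exp_add, hw]
  push_cast
  ring_nf

noncomputable def qseq (t : ℂ) (m : ℕ) : ℕ → Polynomial ℂ
  | 0 => X ^ m
  | n+1 => qseq t m n - (qseq t m n).comp (X - C t)

lemma qseq_deg (t : ℂ) (m : ℕ) : ∀ n, qseq t m n ≠ 0 → (qseq t m n).natDegree + n ≤ m := by
  intro n
  induction n with
  | zero => intro _; simp [qseq]
  | succ n ih =>
    intro h
    have hp : qseq t m n ≠ 0 := by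
      intro h0
      apply h
      simp [qseq, h0]
    have hlc : (qseq t m n).comp (X - C t) ≠ 0 := by
      intro h0
      have := leadingCoeff_comp (p := qseq t m n) (q := X - C t) (by simp [natDegree_X_sub_C])
      rw [h0] at this
      simp only [leadingCoeff_zero, leadingCoeff_X_sub_C, one_pow, mul_one] at this
      exact hp (leadingCoeff_eq_zero.mp this.symm)
    have hdeg : ((qseq t m n).comp (X - C t)).degree = (qseq t m n).degree := by
      rw [degree_eq_natDegree hlc, degree_eq_natDegree hp, natDegree_comp,
        natDegree_X_sub_C, mul_one]
    have hlt : (qseq t m (n+1)).degree < (qseq t m n).degree := by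
      show (qseq t m n - (qseq t m n).comp (X - C t)).degree < _
      apply degree_sub_lt hdeg.symm hp
      rw [leadingCoeff_comp (by simp [natDegree_X_sub_C]), leadingCoeff_X_sub_C, one_pow,
        mul_one]
    have := natDegree_lt_natDegree h hlt
    have := ih hp
    omega

lemma qseq_top (t : ℂ) (m : ℕ) : qseq t m (m+1) = 0 := by
  by_contra h
  have := qseq_deg t m (m+1) h
  omega

end Aux

open Polynomial in
/-- For `t > 0`, `Re λ < -1/2` and `m ∈ ℕ`, the function `g_λ(s) log^m(s)` lies in
`L^2[0,1]`, satisfies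
`T(t)(g_λ log^m) = e^{λt} g_λ Σ_{j=0}^m binom(m,j) (-t)^{m-j} log^j`, and is
annihilated by `(e^{λt} - T(t))^{m+1}`, i.e. it is in the `(m+1)`-st generalized
eigenspace of `T(t)` for the eigenvalue `e^{λt}`. -/
theorem stmt18 (t : ℝ) (ht : 0 < t) (lam : ℂ) (hl : lam.re < -(1/2)) (m : ℕ) :
    let g : ℝ → ℂ := fun s => (s : ℂ) ^ (-(lam + 1)) * (Real.log s : ℂ) ^ m
    MemLp g 2 (volume.restrict (Ioc (0:ℝ) 1)) ∧
    (∀ s ∈ Ioc (0:ℝ) 1,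
      (Real.exp (-t) : ℂ) * g (Real.exp (-t) * s) =
        Complex.exp (lam * t) * (s : ℂ) ^ (-(lam + 1)) *
          ∑ j ∈ Finset.range (m + 1),
            (m.choose j : ℂ) * (-(t : ℂ)) ^ (m - j) * (Real.log s : ℂ) ^ j) ∧
    (∀ s ∈ Ioc (0:ℝ) 1,
      ((fun h : ℝ → ℂ => fun x =>
          Complex.exp (lam * t) * h x - (Real.exp (-t) : ℂ) * h (Real.exp (-t) * x))^[m + 1]
        g) s = 0) := by
  intro g
  have hlog : ∀ s : ℝ, 0 < s → Real.log (Real.exp (-t) * s) = -t + Real.log s := by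
    intro s hs
    rw [Real.log_mul (Real.exp_ne_zero _) (ne_of_gt hs), Real.log_exp]
  refine ⟨?_, ?_, ?_⟩
  ·
    have hg : g = fun s : ℝ => (s : ℂ) ^ (-(lam + 1)) * (Real.log s : ℂ) ^ m := rfl
    have hm : AEStronglyMeasurable g (volume.restrict (Ioc (0:ℝ) 1)) := by
      have hmeas : Measurable (fun s : ℝ =>
          Complex.exp ((Real.log s : ℂ) * (-(lam+1))) * (Real.log s : ℂ) ^ m) :=
        (Complex.measurable_exp.comp ((Complex.measurable_ofReal.comp
          Real.measurable_log).mul_const _)).mul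
          ((Complex.measurable_ofReal.comp Real.measurable_log).pow_const m)
      apply hmeas.aestronglyMeasurable.congr
      rw [Filter.EventuallyEq, ae_restrict_iff' measurableSet_Ioc]
      refine ae_of_all _ fun s hs => ?_
      have h1 : ((s:ℂ)) ^ (-(lam+1)) = Complex.exp ((Real.log s : ℂ) * (-(lam+1))) := by
        rw [Complex.cpow_def_of_ne_zero (by exact_mod_cast (ne_of_gt hs.1)),
          Complex.ofReal_log hs.1.le]
      show _ = g s; rw [hg]; dsimp only; rw [h1]
    rw [memLp_two_iff_integrable_sq_norm hm]
    set a : ℝ := -2*lam.re - 2 with ha_def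
    have ha : -1 < a := by simp only [ha_def]; linarith
    set ε : ℝ := (a+1)/(4*(m+1)) with hε_def
    have hε : 0 < ε := by
      have h1 : 0 < a + 1 := by linarith
      positivity
    set b : ℝ := a - 2*m*ε with hb_def
    have hb : -1 < b := by
      have h1 : ε * (4*(m+1)) = a + 1 := by
        rw [hε_def, div_mul_cancel₀]; positivity
      have h2 : (2*m : ℝ) * ε ≤ 2*(m+1)*ε := by
        have : (2*m:ℝ) ≤ 2*(m+1) := by push_cast; linarith
        nlinarith
      simp only [hb_def]
      nlinarith
    set C : ℝ := (1/ε)^(2*m) with hC_def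
    have hbd : IntegrableOn (fun s : ℝ => C * s ^ b) (Ioc (0:ℝ) 1) volume := by
      exact ((intervalIntegral.intervalIntegrable_rpow' hb (a := 0) (b := 1)).1).const_mul C
    apply Integrable.mono' hbd (hm.norm.pow 2)
    rw [ae_restrict_iff' measurableSet_Ioc]
    refine ae_of_all _ fun s hs => ?_
    have hs0 := hs.1
    have hnorm : ‖g s‖ = s ^ (-(lam.re + 1)) * |Real.log s| ^ m := by
      rw [hg]
      simp only [norm_mul, norm_pow, Complex.norm_real,
        Complex.norm_cpow_eq_rpow_re_of_pos hs0, Real.norm_eq_abs]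
      norm_num
    have hlogbd : |Real.log s| ≤ s ^ (-ε) / ε := by
      have h1 : |Real.log s| = Real.log s⁻¹ := by
        rw [Real.log_inv, abs_of_nonpos (Real.log_nonpos hs0.le hs.2)]
      rw [h1]
      calc Real.log s⁻¹ ≤ (s⁻¹) ^ ε / ε := Real.log_le_rpow_div (inv_nonneg.mpr hs0.le) hε
        _ = s ^ (-ε) / ε := by rw [Real.inv_rpow hs0.le, ← Real.rpow_neg hs0.le]
    have e1 : (s ^ (-(lam.re+1)))^(2:ℕ) = s ^ a := by
      rw [← Real.rpow_natCast (s ^ (-(lam.re+1))) 2, ← Real.rpow_mul hs0.le,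
        show (-(lam.re+1) * ((2:ℕ):ℝ) : ℝ) = a by push_cast [ha_def]; ring]
    have e2 : (|Real.log s|^m)^(2:ℕ) = |Real.log s|^(2*m) := by
      rw [← pow_mul, mul_comm]
    simp only [Pi.pow_apply]
    rw [hnorm, mul_pow, e1, e2, Real.norm_of_nonneg (by positivity)]
    calc s ^ a * |Real.log s| ^ (2*m)
        ≤ s ^ a * ((s ^ (-ε) / ε) ^ (2*m)) := by
          apply mul_le_mul_of_nonneg_left (pow_le_pow_left₀ (abs_nonneg _) hlogbd _)
            (Real.rpow_nonneg hs0.le _)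
      _ = C * s ^ b := by
          rw [show s ^ (-ε)/ε = s^(-ε) * (1/ε) by ring, mul_pow,
            ← Real.rpow_natCast (s ^ (-ε)) (2*m), ← Real.rpow_mul hs0.le, ← hC_def,
            show s^a * (s ^ (-ε * ((2*m:ℕ):ℝ)) * C) = C * (s^a * s^(-ε * ((2*m:ℕ):ℝ))) from by
              ring,
            ← Real.rpow_add hs0,
            show a + -ε * ((2*m:ℕ):ℝ) = b from by push_cast [hb_def]; ring]
  · intro s hs
    show (Real.exp (-t) : ℂ) * ((↑(Real.exp (-t) * s) : ℂ) ^ (-(lam+1)) * _) = _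
    rw [← mul_assoc, keycpow t hs.1 _ lam rfl, hlog s hs.1]
    congr 1
    push_cast
    rw [show (-(t:ℂ) + ↑(Real.log s)) = (↑(Real.log s) + -(t:ℂ)) by ring, add_pow]
    exact Finset.sum_congr rfl fun j hj => by ring
  · intro s hs
    have main : ∀ n, ∀ s ∈ Ioc (0:ℝ) 1,
        ((fun h : ℝ → ℂ => fun x =>
          Complex.exp (lam * t) * h x - (Real.exp (-t) : ℂ) * h (Real.exp (-t) * x))^[n] g) s
          = Complex.exp (lam * t) ^ n * (s : ℂ) ^ (-(lam+1)) *
            (qseq t m n).eval (Real.log s : ℂ) := by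
      intro n
      induction n with
      | zero => intro s hs; simp [qseq, g]
      | succ n ih =>
        intro s hs
        rw [Function.iterate_succ_apply']
        have hs' : Real.exp (-t) * s ∈ Ioc (0:ℝ) 1 := by
          constructor
          · exact mul_pos (Real.exp_pos _) hs.1
          · have h1 : Real.exp (-t) ≤ 1 := Real.exp_le_one_iff.mpr (by linarith)
            nlinarith [hs.1, hs.2]
        show Complex.exp (lam * t) * _ - (Real.exp (-t) : ℂ) * _ = _
        rw [ih s hs, ih _ hs', hlog s hs.1]
        have h2 := keycpow t hs.1 (-(lam+1)) lam rfl
        have heval : (qseq ↑t m (n+1)).eval (Real.log s : ℂ)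
            = (qseq ↑t m n).eval (Real.log s : ℂ)
              - (qseq ↑t m n).eval ((Real.log s : ℂ) - t) := by
          rw [qseq]
          simp [eval_comp]
        have hc : ((-t + Real.log s : ℝ) : ℂ) = (Real.log s : ℂ) - (t:ℂ) := by
          push_cast; ring
        rw [heval, hc]
        linear_combination (-(Complex.exp (lam * ↑t) ^ n) *
          (qseq (↑t:ℂ) m n).eval ((Real.log s : ℂ) - (t:ℂ))) * h2
    rw [main (m+1) s hs, qseq_top, eval_zero, mul_zero]
end

section
/- Let t > 0, λ ∈ ℂ with Re λ < -1/2, f ∈ L^∞[0,1] with lim_{s→0⁺} f(s) = L ≠ 0, and set g = g_λ f where g_λ(s) = s^{-(λ+1)}. Then g ∈ L^2[0,1] and the sequence e^{-ntλ} T(t)^n g converges to L g_λ in L^2[0,1] as n → ∞; in particular g_λ lies in the closed T(t)-invariant subspace generated by g. -/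
open MeasureTheory Set
open scoped ENNReal

private lemma aux_transfer {P : ℝ → Prop}
    (hP : ∀ᵐ x ∂(volume.restrict (Ioc (0:ℝ) 1)), P x) {c : ℝ} (hc : 0 < c) (hc1 : c ≤ 1) :
    ∀ᵐ s ∂(volume.restrict (Ioc (0:ℝ) 1)), P (c * s) := by
  rw [ae_iff, Measure.restrict_apply' measurableSet_Ioc] at hP ⊢
  have hsub : {s : ℝ | ¬ P (c * s)} ∩ Ioc 0 1 ⊆ (c * ·) ⁻¹' ({x : ℝ | ¬ P x} ∩ Ioc 0 1) := by
    rintro s ⟨hs, h0, h1⟩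
    exact ⟨hs, mul_pos hc h0, mul_le_one₀ hc1 h0.le h1⟩
  refine measure_mono_null hsub ?_
  rw [Real.volume_preimage_mul_left (ne_of_gt hc), hP, mul_zero]

private lemma aux_key (z : ℂ) : ‖z‖ₑ ^ (2:ℝ) = ENNReal.ofReal (‖z‖ ^ 2) := by
  rw [← ofReal_norm,
    ENNReal.ofReal_rpow_of_nonneg (norm_nonneg z) (by norm_num : (0:ℝ) ≤ 2),
    show (2:ℝ) = ((2:ℕ):ℝ) by norm_num, Real.rpow_natCast]

private lemma aux_exp (n : ℕ) (t : ℝ) (lam : ℂ) :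
    Complex.exp (-((n : ℂ) * t * lam)) * ((Real.exp (-((n:ℝ) * t)) : ℂ) *
      ((Real.exp (-((n:ℝ) * t)) : ℂ) ^ (-(lam + 1)))) = 1 := by
  rw [Complex.ofReal_exp, Complex.cpow_def_of_ne_zero (Complex.exp_ne_zero _),
    Complex.log_exp (by simpa using Real.pi_pos) (by simpa using Real.pi_pos.le),
    ← Complex.exp_add, ← Complex.exp_add,
    show -((n:ℂ)*t*lam) + (((-((n:ℝ)*t) : ℝ):ℂ) + ((-((n:ℝ)*t) : ℝ):ℂ) * (-(lam+1))) = 0 by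
      push_cast; ring,
    Complex.exp_zero]


/-- Let `t > 0`, `Re λ < -1/2`, `f ∈ L^∞[0,1]` with `lim_{s→0⁺} f(s) = L ≠ 0`, and
`g = g_λ f` where `g_λ(s) = s^{-(λ+1)}`. Then `g ∈ L^2[0,1]` and
`e^{-ntλ} T(t)^n g = e^{-ntλ} T(nt) g → L g_λ` in `L^2[0,1]` as `n → ∞`; in
particular `g_λ` lies in the closed `T(t)`-invariant subspace generated by `g`. -/
theorem stmt19 (t : ℝ) (ht : 0 < t) (lam : ℂ) (hl : lam.re < -(1/2))
    (f : ℝ → ℂ) (hf : MemLp f ⊤ (volume.restrict (Ioc (0:ℝ) 1)))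
    (L : ℂ) (hL : L ≠ 0)
    (hlim : Filter.Tendsto f (nhdsWithin 0 (Ioi (0:ℝ))) (nhds L)) :
    let g : ℝ → ℂ := fun s => (s : ℂ) ^ (-(lam + 1)) * f s
    MemLp g 2 (volume.restrict (Ioc (0:ℝ) 1)) ∧
    Filter.Tendsto (fun n : ℕ =>
        eLpNorm (fun s : ℝ =>
            Complex.exp (-((n : ℂ) * t * lam)) *
              ((Real.exp (-((n : ℝ) * t)) : ℂ) * g (Real.exp (-((n : ℝ) * t)) * s)) -
            L * (s : ℂ) ^ (-(lam + 1))) 2 (volume.restrict (Ioc (0:ℝ) 1)))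
      Filter.atTop (nhds 0) := by
  intro g
  have hg : g = fun s : ℝ => (s : ℂ) ^ (-(lam + 1)) * f s := rfl
  set μ := volume.restrict (Ioc (0:ℝ) 1) with hμ
  set gl : ℝ → ℂ := fun s => (s:ℂ) ^ (-(lam+1)) with hgldef
  -- measurability of gl
  have hglm : AEStronglyMeasurable gl μ := by
    refine ContinuousOn.aestronglyMeasurable (fun x hx => ?_) measurableSet_Ioc
    exact (Complex.continuousAt_ofReal_cpow_const x _ (Or.inr (ne_of_gt hx.1))).continuousWithinAt
  have hre : -1 < (-(lam+1)).re * 2 := by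
    simp only [Complex.neg_re, Complex.add_re, Complex.one_re]
    linarith
  -- finite square lintegral of gl
  have hInt : IntegrableOn (fun s : ℝ => s ^ ((-(lam+1)).re * 2)) (Ioc (0:ℝ) 1) :=
    ((intervalIntegral.integrableOn_Ioo_rpow_iff one_pos).mpr hre).congr_set_ae Ioo_ae_eq_Ioc.symm
  have hglsq : ∀ s ∈ Ioc (0:ℝ) 1,
      ENNReal.ofReal (‖gl s‖ ^ 2) = ENNReal.ofReal (s ^ ((-(lam+1)).re * 2)) := by
    intro s hs
    congr 1
    rw [hgldef]
    rw [Complex.norm_cpow_eq_rpow_re_of_pos hs.1,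
      Real.rpow_mul hs.1.le, show (2:ℝ) = ((2:ℕ):ℝ) by norm_num, Real.rpow_natCast]
  have hIglfin : ∫⁻ s, ENNReal.ofReal (‖gl s‖ ^ 2) ∂μ < ⊤ := by
    rw [hμ, setLIntegral_congr_fun measurableSet_Ioc
      hglsq]
    calc ∫⁻ s in Ioc (0:ℝ) 1, ENNReal.ofReal (s ^ ((-(lam+1)).re * 2)) ∂volume
        ≤ ∫⁻ s in Ioc (0:ℝ) 1, ‖s ^ ((-(lam+1)).re * 2)‖ₑ ∂volume := by
          refine lintegral_mono fun s => ?_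
          rw [← ofReal_norm, Real.norm_eq_abs]
          exact ENNReal.ofReal_le_ofReal (le_abs_self _)
      _ < ⊤ := hInt.hasFiniteIntegral
  have hglMem : MemLp gl 2 μ := by
    refine ⟨hglm, ?_⟩
    rw [eLpNorm_eq_lintegral_rpow_enorm_toReal (by norm_num) (by norm_num)]
    simp only [ENNReal.toReal_ofNat]
    refine ENNReal.rpow_lt_top_of_nonneg (by norm_num) ?_
    rw [lintegral_congr fun s => aux_key (gl s)]
    exact hIglfin.ne
  -- essential sup bound for f
  set C := (eLpNormEssSup f μ).toReal with hC
  have hfC : ∀ᵐ x ∂μ, ‖f x‖ ≤ C := by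
    have htop : eLpNormEssSup f μ ≠ ⊤ := by
      have h2 := hf.2
      rw [eLpNorm_exponent_top] at h2
      exact h2.ne
    filter_upwards [ae_le_eLpNormEssSup (f := f) (μ := μ)] with x hx
    have := ENNReal.toReal_mono htop hx
    simpa using this
  -- Memℒp g
  have hgmem : MemLp g 2 μ := by
    rw [hg]
    refine hglMem.of_le_mul (c := C) (hglm.mul hf.aestronglyMeasurable) ?_
    filter_upwards [hfC] with x hx
    rw [norm_mul, mul_comm]
    exact mul_le_mul_of_nonneg_right hx (norm_nonneg _)
  refine ⟨hgmem, ?_⟩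
  -- the sequence
  set ε : ℕ → ℝ := fun n => Real.exp (-((n:ℝ)*t)) with hε
  have hε0 : ∀ n, 0 < ε n := fun n => Real.exp_pos _
  have hε1 : ∀ n, ε n ≤ 1 := fun n => by
    rw [hε, ← Real.exp_zero]
    exact Real.exp_le_exp.mpr (neg_nonpos.mpr (mul_nonneg (Nat.cast_nonneg n) ht.le))
  have hεlim : Filter.Tendsto ε Filter.atTop (nhds 0) :=
    Real.tendsto_exp_atBot.comp (Filter.tendsto_neg_atTop_atBot.comp
      (Filter.Tendsto.atTop_mul_const ht tendsto_natCast_atTop_atTop))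
  set h : ℕ → ℝ → ℂ := fun n s => gl s * (f (ε n * s) - L) with hh
  -- a.e. identity between the sequence functions
  have hEh : ∀ n : ℕ, (fun s : ℝ =>
      Complex.exp (-((n : ℂ) * t * lam)) *
        ((Real.exp (-((n : ℝ) * t)) : ℂ) * g (Real.exp (-((n : ℝ) * t)) * s)) -
      L * (s : ℂ) ^ (-(lam + 1))) =ᵐ[μ] h n := by
    intro n
    filter_upwards [ae_restrict_mem measurableSet_Ioc] with s hs
    have key : Complex.exp (-((n : ℂ) * t * lam)) * ((Real.exp (-((n:ℝ) * t)) : ℂ) *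
        ((Real.exp (-((n:ℝ) * t)) : ℂ) ^ (-(lam + 1)))) = 1 := aux_exp n t lam
    show Complex.exp (-((n : ℂ) * t * lam)) *
        ((Real.exp (-((n : ℝ) * t)) : ℂ) *
          (((Real.exp (-((n : ℝ) * t)) * s : ℝ) : ℂ) ^ (-(lam + 1)) *
            f (Real.exp (-((n : ℝ) * t)) * s))) -
        L * (s : ℂ) ^ (-(lam + 1))
      = (s : ℂ) ^ (-(lam + 1)) * (f (Real.exp (-((n:ℝ) * t)) * s) - L)
    rw [Complex.ofReal_mul,
      Complex.mul_cpow_ofReal_nonneg (Real.exp_pos _).le hs.1.le]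
    linear_combination ((s:ℂ) ^ (-(lam+1)) * f (Real.exp (-((n:ℝ)*t)) * s)) * key
  -- measurability of h n
  obtain ⟨f', hf'sm, hff'⟩ := hf.aestronglyMeasurable
  have hcomp : ∀ n, AEStronglyMeasurable (fun s => f (ε n * s)) μ := fun n =>
    ⟨fun s => f' (ε n * s), hf'sm.comp_measurable (measurable_const_mul _),
      aux_transfer hff' (hε0 n) (hε1 n)⟩
  have hhm : ∀ n, AEStronglyMeasurable (h n) μ := fun n =>
    hglm.mul ((hcomp n).sub aestronglyMeasurable_const)
  -- dominated convergence
  have htend : Filter.Tendsto (fun n => ∫⁻ s, ENNReal.ofReal (‖h n s‖^2) ∂μ)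
      Filter.atTop (nhds 0) := by
    have hdc := tendsto_lintegral_of_dominated_convergence'
      (μ := μ) (F := fun n s => ENNReal.ofReal (‖h n s‖^2)) (f := fun _ => 0)
      (bound := fun s => ENNReal.ofReal (((C + ‖L‖) * ‖gl s‖)^2))
      (fun n => (((hhm n).norm.aemeasurable).pow_const 2).ennreal_ofReal)
      (fun n => by
        filter_upwards [aux_transfer hfC (hε0 n) (hε1 n)] with s hs
        refine ENNReal.ofReal_le_ofReal (pow_le_pow_left₀ (norm_nonneg _) ?_ 2)
        rw [hh]
        simp only
        rw [norm_mul, mul_comm]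
        refine mul_le_mul_of_nonneg_right ?_ (norm_nonneg _)
        calc ‖f (ε n * s) - L‖ ≤ ‖f (ε n * s)‖ + ‖L‖ := norm_sub_le _ _
          _ ≤ C + ‖L‖ := add_le_add hs le_rfl)
      (by
        have heq : ∀ s : ℝ, ENNReal.ofReal (((C + ‖L‖) * ‖gl s‖)^2)
            = ENNReal.ofReal ((C + ‖L‖)^2) * ENNReal.ofReal (‖gl s‖^2) := fun s => by
          rw [mul_pow, ENNReal.ofReal_mul (sq_nonneg _)]
        rw [lintegral_congr heq, lintegral_const_mul' _ _ ENNReal.ofReal_ne_top]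
        exact ENNReal.mul_ne_top ENNReal.ofReal_ne_top hIglfin.ne)
      (by
        filter_upwards [ae_restrict_mem measurableSet_Ioc] with s hs
        have h2 : Filter.Tendsto (fun n => ε n * s) Filter.atTop (nhdsWithin 0 (Ioi 0)) := by
          refine tendsto_nhdsWithin_of_tendsto_nhds_of_eventually_within _ ?_
            (Filter.Eventually.of_forall fun n => mul_pos (hε0 n) hs.1)
          simpa using hεlim.mul_const s
        have h3 : Filter.Tendsto (fun n => h n s) Filter.atTop (nhds 0) := by
          have h5 : Filter.Tendsto (fun n : ℕ => f (ε n * s) - L) Filter.atTop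
              (nhds (L - L)) := Filter.Tendsto.sub (hlim.comp h2) tendsto_const_nhds
          have h4 := Filter.Tendsto.const_mul (gl s) h5
          simpa [hh, sub_self] using h4
        simpa using ENNReal.tendsto_ofReal ((h3.norm).pow 2))
    simpa using hdc
  -- convert to eLpNorm
  have hfinal : Filter.Tendsto (fun n => eLpNorm (h n) 2 μ) Filter.atTop (nhds 0) := by
    have heq : ∀ n, eLpNorm (h n) 2 μ
        = (∫⁻ s, ENNReal.ofReal (‖h n s‖^2) ∂μ) ^ (1/2 : ℝ) := by
      intro n
      rw [eLpNorm_eq_lintegral_rpow_enorm_toReal (by norm_num) (by norm_num)]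
      simp only [ENNReal.toReal_ofNat]
      congr 1
      exact lintegral_congr fun s => aux_key _
    refine Filter.Tendsto.congr (fun n => (heq n).symm) ?_
    have hc : Continuous (fun x : ℝ≥0∞ => x ^ (1/2:ℝ)) := ENNReal.continuous_rpow_const
    have h5 := (hc.tendsto 0).comp htend
    simpa [Function.comp_def, ENNReal.zero_rpow_of_pos (by norm_num : (0:ℝ) < 1/2)] using h5
  exact hfinal.congr fun n => (eLpNorm_congr_ae (hEh n)).symm
end
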